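/- arXiv:2512.23845 — 3 statements merged into one kernel-verified Lean document; each statement's English description precedes it below -/
import Mathlib

section
/- Let $n, l \in \mathbb{N}$, let $M \in \mathbb{N}_0^{n \times n}$ and $A \in \mathbb{N}_0^{n \times l}$. Then the rational number $C(M,A) := \frac{P(A!)}{2^{\mathrm{tr}(M)}} \sum \prod_{i=1}^l \frac{1}{P(M_i!)}$ is an integer, where the sum ranges over all tuples $(M_1,\dots,M_l)$ of matrices in $\mathbb{N}_0^{n \times n}$ satisfying $M_1 + \cdots + M_l = M$ and $SC(M_k,j) + SR(M_k,j) = A_{j,k}$ for all $j \in [n]$ and $k \in [l]$. -/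
lemma two_pow_mul_factorial_dvd (m : ℕ) : 2 ^ m * m.factorial ∣ (2 * m).factorial := by
  induction m with
  | zero => simp
  | succ k ih =>
    have hfac : (2 * (k + 1)).factorial = ((2 * k + 2) * (2 * k + 1)) * (2 * k).factorial := by
      have h2 : 2 * (k + 1) = (2 * k + 1) + 1 := by omega
      rw [h2, Nat.factorial_succ, Nat.factorial_succ]; ring
    have hl : 2 ^ (k + 1) * (k + 1).factorial = (2 * (k + 1)) * (2 ^ k * k.factorial) := by
      rw [Nat.factorial_succ]; ring
    rw [hfac, hl]
    exact mul_dvd_mul ⟨2 * k + 1, by ring⟩ ih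

lemma row_dvd {n : ℕ} (T : Matrix (Fin n) (Fin n) ℕ) (j : Fin n) :
    2 ^ (T j j) * ∏ b, (T j b).factorial ∣ (∑ a, T a j + ∑ b, T j b).factorial := by
  set m := T j j with hm
  set r := ∑ b ∈ Finset.univ.erase j, T j b with hr
  have hprod : ∏ b, (T j b).factorial = m.factorial * ∏ b ∈ Finset.univ.erase j, (T j b).factorial := by
    rw [← Finset.mul_prod_erase _ _ (Finset.mem_univ j)]
  have h1 : 2 ^ m * ∏ b, (T j b).factorial =
      (2 ^ m * m.factorial) * ∏ b ∈ Finset.univ.erase j, (T j b).factorial := by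
    rw [hprod]; ring
  have h2 : (2 ^ m * m.factorial) * ∏ b ∈ Finset.univ.erase j, (T j b).factorial ∣
      (2 * m).factorial * r.factorial :=
    mul_dvd_mul (two_pow_mul_factorial_dvd m) (Nat.prod_factorial_dvd_factorial_sum _ _)
  have h3 : (2 * m).factorial * r.factorial ∣ (2 * m + r).factorial :=
    Nat.factorial_mul_factorial_dvd_factorial_add _ _
  have h4 : 2 * m + r ≤ ∑ a, T a j + ∑ b, T j b := by
    have hc : m ≤ ∑ a, T a j :=
      Finset.single_le_sum (f := fun a => T a j) (fun a _ => Nat.zero_le _) (Finset.mem_univ j)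
    have hrow : ∑ b, T j b = m + r := by
      rw [hr, hm, ← Finset.add_sum_erase _ _ (Finset.mem_univ j)]
    omega
  exact h1 ▸ (h2.trans (h3.trans (Nat.factorial_dvd_factorial h4)))

lemma key_dvd {n : ℕ} (T : Matrix (Fin n) (Fin n) ℕ) :
    2 ^ (∑ j, T j j) * ∏ a, ∏ b, (T a b).factorial ∣
      ∏ j, (∑ a, T a j + ∑ b, T j b).factorial := by
  have h : 2 ^ (∑ j, T j j) * ∏ a, ∏ b, (T a b).factorial =
      ∏ j, (2 ^ (T j j) * ∏ b, (T j b).factorial) := by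
    rw [Finset.prod_mul_distrib, Finset.prod_pow_eq_pow_sum]
  rw [h]
  exact Finset.prod_dvd_prod_of_dvd _ _ (fun j _ => row_dvd T j)

open scoped BigOperators

open Classical in
/-- **Integrality of the combinatorial factor `C(M, A)`.**
For `M ∈ ℕ₀^{n×n}` and `A ∈ ℕ₀^{n×l}`, the rational number
`C(M,A) = P(A!) / 2^{tr M} · ∑ ∏ᵢ 1 / P(Mᵢ!)`,
where the sum ranges over all tuples `(M₁, …, M_l)` of matrices in `ℕ₀^{n×n}` with
`M₁ + ⋯ + M_l = M` and `SC(Mₖ, j) + SR(Mₖ, j) = A j k` for all `j, k`, is an integer. -/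
theorem C_of_M_A_isInt (n l : ℕ) (M : Matrix (Fin n) (Fin n) ℕ) (A : Matrix (Fin n) (Fin l) ℕ) :
    ∃ z : ℤ,
      ((∏ j, ∏ k, (Nat.factorial (A j k) : ℚ)) / 2 ^ (∑ j, M j j)) *
        (∑ᶠ T : Fin l → Matrix (Fin n) (Fin n) ℕ,
          if (∑ k, T k) = M ∧
              (∀ (j : Fin n) (k : Fin l), (∑ a, T k a j) + (∑ b, T k j b) = A j k) then
            ∏ i, (1 : ℚ) / ∏ a, ∏ b, (Nat.factorial (T i a b) : ℚ)
          else 0) = (z : ℚ) := by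
  classical
  set F : (Fin l → Matrix (Fin n) (Fin n) ℕ) → ℚ := fun T =>
    if (∑ k, T k) = M ∧
        (∀ (j : Fin n) (k : Fin l), (∑ a, T k a j) + (∑ b, T k j b) = A j k) then
      ∏ i, (1 : ℚ) / ∏ a, ∏ b, (Nat.factorial (T i a b) : ℚ)
    else 0 with hF
  -- finiteness of the support
  have hfin : (Function.support F).Finite := by
    have hbig : {T : Fin l → Matrix (Fin n) (Fin n) ℕ |
        ∀ k a b, T k a b ≤ M a b}.Finite := by
      have hpi := Set.Finite.pi (fun k : Fin l => Set.Finite.pi (fun a : Fin n =>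
        Set.Finite.pi (fun b : Fin n => Set.finite_Iic (M a b))))
      apply hpi.subset
      intro T hT
      intro k _
      intro a _
      intro b _
      exact hT k a b
    apply hbig.subset
    intro T hT
    have hne : F T ≠ 0 := hT
    by_cases hc : (∑ k, T k) = M ∧
        (∀ (j : Fin n) (k : Fin l), (∑ a, T k a j) + (∑ b, T k j b) = A j k)
    · intro k a b
      have happ : (∑ k', T k') a b = ∑ k', T k' a b := by
        simp [Matrix.sum_apply]
      calc T k a b ≤ ∑ k', T k' a b :=
            Finset.single_le_sum (f := fun k' => T k' a b) (fun _ _ => Nat.zero_le _)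
              (Finset.mem_univ k)
        _ = M a b := by rw [← happ, hc.1]
    · exfalso
      apply hne
      simp only [hF]
      exact if_neg hc
  -- the integer witness
  set g : (Fin l → Matrix (Fin n) (Fin n) ℕ) → ℕ := fun T =>
    if (∑ k, T k) = M ∧
        (∀ (j : Fin n) (k : Fin l), (∑ a, T k a j) + (∑ b, T k j b) = A j k) then
      ∏ k, (∏ j, (∑ a, T k a j + ∑ b, T k j b).factorial) /
        (2 ^ (∑ j, T k j j) * ∏ a, ∏ b, (T k a b).factorial)
    else 0 with hg
  refine ⟨((∑ T ∈ hfin.toFinset, g T : ℕ) : ℤ), ?_⟩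
  rw [finsum_eq_sum F hfin, Finset.mul_sum]
  push_cast
  apply Finset.sum_congr rfl
  intro T _
  by_cases hc : (∑ k, T k) = M ∧
      (∀ (j : Fin n) (k : Fin l), (∑ a, T k a j) + (∑ b, T k j b) = A j k)
  · obtain ⟨hsum, hA⟩ := hc
    have hFT : F T = ∏ i, (1 : ℚ) / ∏ a, ∏ b, (Nat.factorial (T i a b) : ℚ) := by
      simp only [hF]
      exact if_pos ⟨hsum, hA⟩
    have hcast : ∀ k : Fin l,
        ((((∏ j, (∑ a, T k a j + ∑ b, T k j b).factorial) /
          (2 ^ (∑ j, T k j j) * ∏ a, ∏ b, (T k a b).factorial) : ℕ)) : ℚ) =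
        (∏ j, ((∑ a, T k a j + ∑ b, T k j b).factorial : ℚ)) /
          (2 ^ (∑ j, T k j j) * ∏ a, ∏ b, ((T k a b).factorial : ℚ)) := by
      intro k
      rw [Nat.cast_div (key_dvd (T k))]
      · push_cast; ring
      · have h1 : 0 < 2 ^ (∑ j, T k j j) * ∏ a, ∏ b, (T k a b).factorial := by
          apply Nat.mul_pos (Nat.pow_pos (by norm_num))
          exact Finset.prod_pos fun a _ => Finset.prod_pos fun b _ => Nat.factorial_pos _
        exact_mod_cast (Nat.cast_pos (α := ℚ)).mpr h1 |>.ne'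
    have hgT : ((g T : ℕ) : ℚ) =
        ∏ k, ((∏ j, ((∑ a, T k a j + ∑ b, T k j b).factorial : ℚ)) /
          (2 ^ (∑ j, T k j j) * ∏ a, ∏ b, ((T k a b).factorial : ℚ))) := by
      simp only [hg]
      rw [if_pos ⟨hsum, hA⟩, Nat.cast_prod]
      exact Finset.prod_congr rfl fun k _ => hcast k
    have hApr : (∏ j, ∏ k, ((A j k).factorial : ℚ)) =
        ∏ k, ∏ j, (((∑ a, T k a j + ∑ b, T k j b).factorial : ℚ)) := by
      rw [Finset.prod_comm]
      refine Finset.prod_congr rfl fun k _ => Finset.prod_congr rfl fun j _ => ?_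
      rw [hA j k]
    have htr : (∑ j, M j j) = ∑ k, ∑ j, T k j j := by
      have hMjj : ∀ j, M j j = ∑ k, T k j j := by
        intro j; rw [← hsum]; simp [Matrix.sum_apply]
      simp_rw [hMjj]
      exact Finset.sum_comm
    rw [hFT, hgT, hApr, htr, ← Finset.prod_pow_eq_pow_sum]
    simp only [Finset.prod_div_distrib, Finset.prod_mul_distrib, Finset.prod_const_one]
    rw [div_mul_div_comm, mul_one]
  · have hFT : F T = 0 := by simp only [hF]; exact if_neg hc
    have hgT : g T = 0 := by simp only [hg]; exact if_neg hc
    rw [hFT, hgT]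
    simp
end

section
/- Let $n \in \mathbb{N}$, let $\alpha = (\alpha_1,\dots,\alpha_n) \in \mathbb{N}_0^n$, and let $M \in \mathbb{N}_0^{n \times n}$ be upper triangular (i.e. $M_{k,l} = 0$ for $k > l$) with $SC(M,j) + SR(M,j) = \alpha_j$ for all $j \in [n]$. Let $O = \{(k,r) : k \in [n], 1 \le r \le \alpha_k\}$. Then the number of pairings $\mathcal{P}$ of $O$ such that for all $k \le l$ in $[n]$ the number of pairs in $\mathcal{P}$ of the form $\{(k,r),(l,s)\}$ (with first coordinates $k$ and $l$) equals $M_{k,l}$ is exactly $\frac{\alpha_1! \cdots \alpha_n!}{2^{\mathrm{tr}(M)} \prod_{a,b=1}^n M_{a,b}!}$. -/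
noncomputable section

/-- `P` is a pairing of the finite set `O`: a collection of pairwise disjoint
two-element subsets of `O` whose union is `O`. -/
def IsPairing {ι : Type*} [DecidableEq ι] (O : Finset ι) (P : Finset (Finset ι)) : Prop :=
  (∀ p ∈ P, p.card = 2) ∧ (∀ p ∈ P, ∀ p' ∈ P, p ≠ p' → Disjoint p p') ∧ P.biUnion id = O

open Classical in
/-- The (finite) collection of all pairings of a finite set `O`. -/
def pairings {ι : Type*} [DecidableEq ι] (O : Finset ι) : Finset (Finset (Finset ι)) :=
  O.powerset.powerset.filter fun P => IsPairing O P

/-- The occurrence set `O = {(k, r) : k ∈ [n], r < α_k}`. -/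
def occSet {n : ℕ} (α : Fin n → ℕ) : Finset (Fin n × ℕ) :=
  Finset.univ.biUnion fun k => (Finset.range (α k)).image fun r => (k, r)

namespace CPM

variable {ι : Type*} [DecidableEq ι]

lemma mem_pairings {O : Finset ι} {P : Finset (Finset ι)} :
    P ∈ pairings O ↔ IsPairing O P := by
  classical
  unfold pairings
  simp only [Finset.mem_filter, Finset.mem_powerset]
  constructor
  · exact fun h => h.2
  · intro h
    refine ⟨fun p hp => Finset.mem_powerset.mpr fun z hz => ?_, h⟩
    rw [← h.2.2]
    exact Finset.mem_biUnion.mpr ⟨p, hp, hz⟩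

lemma partner_unique {P : Finset (Finset ι)}
    (hdisj : ∀ p ∈ P, ∀ p' ∈ P, p ≠ p' → Disjoint p p') {x y z : ι}
    (hy : ({x, y} : Finset ι) ∈ P) (hz : ({x, z} : Finset ι) ∈ P) (hzx : z ≠ x) : z = y := by
  by_cases hpq : ({x, y} : Finset ι) = {x, z}
  · have hzz : z ∈ ({x, y} : Finset ι) := hpq ▸ (by simp)
    simp only [Finset.mem_insert, Finset.mem_singleton] at hzz
    tauto
  · exact absurd (hdisj _ hy _ hz hpq)
      (Finset.not_disjoint_iff.mpr ⟨x, by simp, by simp⟩)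

lemma exists_partner {O : Finset ι} {P : Finset (Finset ι)} (h : IsPairing O P)
    {x : ι} (hx : x ∈ O) :
    ∃ y, y ≠ x ∧ ({x, y} : Finset ι) ∈ P := by
  rw [← h.2.2] at hx
  obtain ⟨p, hp, hxp⟩ := Finset.mem_biUnion.mp hx
  obtain ⟨a, c, hac, rfl⟩ := Finset.card_eq_two.mp (h.1 p hp)
  simp only [id] at hxp
  simp only [Finset.mem_insert, Finset.mem_singleton] at hxp
  rcases hxp with rfl | rfl
  · exact ⟨c, fun e => hac e.symm, hp⟩
  · exact ⟨a, fun e => hac e, by rwa [Finset.pair_comm]⟩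

lemma biUnion_erase {O : Finset ι} {P : Finset (Finset ι)} (h : IsPairing O P)
    {p : Finset ι} (hp : p ∈ P) : (P.erase p).biUnion id = O \ p := by
  ext z
  simp only [Finset.mem_biUnion, Finset.mem_erase, Finset.mem_sdiff, id]
  constructor
  · rintro ⟨q, ⟨hqp, hq⟩, hzq⟩
    refine ⟨h.2.2 ▸ Finset.mem_biUnion.mpr ⟨q, hq, hzq⟩, fun hzp => ?_⟩
    exact (Finset.disjoint_left.mp (h.2.1 q hq p hp hqp) hzq) hzp
  · rintro ⟨hzO, hzp⟩
    obtain ⟨q, hq, hzq⟩ := Finset.mem_biUnion.mp (show z ∈ P.biUnion id from h.2.2 ▸ hzO)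
    exact ⟨q, ⟨fun e => hzp (e ▸ hzq), hq⟩, hzq⟩

lemma isPairing_erase {O : Finset ι} {P : Finset (Finset ι)} (h : IsPairing O P)
    {p : Finset ι} (hp : p ∈ P) : IsPairing (O \ p) (P.erase p) :=
  ⟨fun q hq => h.1 q (Finset.mem_of_mem_erase hq),
   fun q hq q' hq' => h.2.1 q (Finset.mem_of_mem_erase hq) q' (Finset.mem_of_mem_erase hq'),
   biUnion_erase h hp⟩

lemma not_mem_of_pairing_sdiff {O : Finset ι} {Q : Finset (Finset ι)} {p : Finset ι}
    (h : IsPairing (O \ p) Q) (hne : p.Nonempty) : p ∉ Q := by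
  intro hpQ
  obtain ⟨z, hz⟩ := hne
  have : z ∈ O \ p := h.2.2 ▸ Finset.mem_biUnion.mpr ⟨p, hpQ, hz⟩
  exact (Finset.mem_sdiff.mp this).2 hz

lemma isPairing_insert {O : Finset ι} {Q : Finset (Finset ι)} {p : Finset ι}
    (h : IsPairing (O \ p) Q) (hpO : p ⊆ O) (hcard : p.card = 2) :
    IsPairing O (insert p Q) := by
  have hsub : ∀ q ∈ Q, q ⊆ O \ p := fun q hq z hz =>
    h.2.2 ▸ Finset.mem_biUnion.mpr ⟨q, hq, hz⟩
  refine ⟨?_, ?_, ?_⟩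
  · intro q hq
    rcases Finset.mem_insert.mp hq with rfl | hq
    · exact hcard
    · exact h.1 q hq
  · have hd : ∀ q ∈ Q, Disjoint p q := fun q hq =>
      Finset.disjoint_right.mpr fun z hz' hz =>
        (Finset.mem_sdiff.mp (hsub _ hq hz')).2 hz
    intro q hq q' hq' hne
    rcases Finset.mem_insert.mp hq with h1 | h1 <;>
      rcases Finset.mem_insert.mp hq' with h2 | h2
    · exact absurd (h1.trans h2.symm) hne
    · exact h1 ▸ hd _ h2
    · exact h2 ▸ (hd _ h1).symm
    · exact h.2.1 q h1 q' h2 hne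
  · rw [Finset.biUnion_insert, h.2.2]
    exact Finset.union_sdiff_of_subset hpO

lemma cnt_erase {O : Finset ι} {x : ι} (hx : x ∈ O) (p : ι → Prop) [DecidablePred p] :
    ((O.erase x).filter p).card + (if p x then 1 else 0) = (O.filter p).card := by
  by_cases hpx : p x
  · rw [Finset.filter_erase, Finset.card_erase_of_mem (Finset.mem_filter.mpr ⟨hx, hpx⟩),
      if_pos hpx]
    have : 1 ≤ (Finset.filter p O).card :=
      Finset.card_pos.mpr ⟨x, Finset.mem_filter.mpr ⟨hx, hpx⟩⟩
    omega
  · rw [Finset.filter_erase, Finset.erase_eq_of_notMem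
      (fun hc => hpx (Finset.mem_filter.mp hc).2), if_neg hpx, add_zero]

lemma sorted_eq {n : ℕ} {k l a c : Fin n} (hkl : k ≤ l) (hac : a ≤ c)
    (h : ({k, l} : Finset (Fin n)) = {a, c}) : k = a ∧ l = c := by
  have h' : ({k, l} : Set (Fin n)) = {a, c} := by
    have := congrArg (fun s : Finset (Fin n) => (s : Set (Fin n))) h
    simpa using this
  rcases Set.pair_eq_pair_iff.mp h' with ⟨rfl, rfl⟩ | ⟨rfl, rfl⟩
  · exact ⟨rfl, rfl⟩
  · constructor <;> [skip; skip] <;> exact le_antisymm (by assumption) (by assumption)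

lemma pair_min_max {n : ℕ} (k l : Fin n) :
    ({min k l, max k l} : Finset (Fin n)) = {k, l} := by
  rcases le_total k l with h | h
  · rw [min_eq_left h, max_eq_right h]
  · rw [min_eq_right h, max_eq_left h, Finset.pair_comm]

open Classical in
lemma count_zero {n : ℕ} (b : ι → Fin n) (O : Finset ι) (M : Matrix (Fin n) (Fin n) ℕ)
    {x y : ι} {a0 b0 : Fin n} (hab : a0 ≤ b0)
    (habs : ({a0, b0} : Finset (Fin n)) = {b x, b y}) (hM : M a0 b0 = 0) :
    (((pairings O).filter fun P => ∀ k l : Fin n, k ≤ l →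
        (P.filter fun p => p.image b = ({k, l} : Finset (Fin n))).card = M k l).filter
      fun P => ({x, y} : Finset ι) ∈ P) = ∅ := by
  rw [Finset.eq_empty_iff_forall_notMem]
  intro P hP
  rw [Finset.mem_filter] at hP
  obtain ⟨hP1, hxyP⟩ := hP
  rw [Finset.mem_filter] at hP1
  have hcond := hP1.2 a0 b0 hab
  rw [hM, Finset.card_eq_zero] at hcond
  have hmem : ({x, y} : Finset ι) ∈ P.filter
      fun p => p.image b = ({a0, b0} : Finset (Fin n)) := by
    rw [Finset.mem_filter]
    exact ⟨hxyP, by rw [Finset.image_insert, Finset.image_singleton, ← habs]⟩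
  rw [hcond] at hmem
  exact absurd hmem (Finset.notMem_empty _)

open Classical in
lemma count_step {n : ℕ} (b : ι → Fin n) (O : Finset ι) (M : Matrix (Fin n) (Fin n) ℕ)
    {x y : ι} (hx : x ∈ O) (hy : y ∈ O) (hxy : x ≠ y)
    {a0 b0 : Fin n} (hab : a0 ≤ b0)
    (habs : ({a0, b0} : Finset (Fin n)) = {b x, b y}) (hM : 0 < M a0 b0) :
    (((pairings O).filter fun P => ∀ k l : Fin n, k ≤ l →
        (P.filter fun p => p.image b = ({k, l} : Finset (Fin n))).card = M k l).filter
      fun P => ({x, y} : Finset ι) ∈ P).card =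
    ((pairings (O \ {x, y})).filter fun P => ∀ k l : Fin n, k ≤ l →
        (P.filter fun p => p.image b = ({k, l} : Finset (Fin n))).card
          = (if (k, l) = (a0, b0) then M a0 b0 - 1 else M k l)).card := by
  have hxyO : ({x, y} : Finset ι) ⊆ O := by
    intro z hz; simp only [Finset.mem_insert, Finset.mem_singleton] at hz
    rcases hz with rfl | rfl
    · exact hx
    · exact hy
  have hcard2 : ({x, y} : Finset ι).card = 2 := Finset.card_pair hxy
  have himg : ({x, y} : Finset ι).image b = ({b x, b y} : Finset (Fin n)) := by
    rw [Finset.image_insert, Finset.image_singleton]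
  have hpredne : ∀ (k l : Fin n), k ≤ l → ¬((k, l) = (a0, b0)) →
      ¬(({x, y} : Finset ι).image b = ({k, l} : Finset (Fin n))) := by
    intro k l hkl hkla hc
    rw [himg, ← habs] at hc
    obtain ⟨h1, h2⟩ := sorted_eq hab hkl hc
    exact hkla (by rw [h1, h2])
  refine Finset.card_bij' (fun P _ => P.erase {x, y}) (fun Q _ => insert {x, y} Q) ?_ ?_ ?_ ?_
  · intro P hP
    rw [Finset.mem_filter] at hP
    obtain ⟨hP1, hxyP⟩ := hP
    rw [Finset.mem_filter, mem_pairings] at hP1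
    obtain ⟨hpair, hcond⟩ := hP1
    rw [Finset.mem_filter, mem_pairings]
    refine ⟨isPairing_erase hpair hxyP, ?_⟩
    intro k l hkl
    rw [Finset.filter_erase]
    by_cases hkla : (k, l) = (a0, b0)
    · have h1 : k = a0 := congrArg Prod.fst hkla
      have h2 : l = b0 := congrArg Prod.snd hkla
      rw [if_pos hkla]
      have hmem : ({x, y} : Finset ι) ∈ P.filter
          fun p => p.image b = ({k, l} : Finset (Fin n)) :=
        Finset.mem_filter.mpr ⟨hxyP, by rw [himg, ← habs, h1, h2]⟩
      rw [Finset.card_erase_of_mem hmem, hcond k l hkl, h1, h2]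
    · rw [if_neg hkla]
      have hnm : ({x, y} : Finset ι) ∉ P.filter
          fun p => p.image b = ({k, l} : Finset (Fin n)) := fun hc =>
        hpredne k l hkl hkla (Finset.mem_filter.mp hc).2
      rw [Finset.erase_eq_of_notMem hnm, hcond k l hkl]
  · intro Q hQ
    rw [Finset.mem_filter, mem_pairings] at hQ
    obtain ⟨hpair, hcond⟩ := hQ
    have hnotin : ({x, y} : Finset ι) ∉ Q :=
      not_mem_of_pairing_sdiff hpair ⟨x, by simp⟩
    rw [Finset.mem_filter]
    refine ⟨?_, Finset.mem_insert_self _ _⟩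
    rw [Finset.mem_filter, mem_pairings]
    refine ⟨isPairing_insert hpair hxyO hcard2, ?_⟩
    intro k l hkl
    rw [Finset.filter_insert]
    by_cases hkla : (k, l) = (a0, b0)
    · have h1 : k = a0 := congrArg Prod.fst hkla
      have h2 : l = b0 := congrArg Prod.snd hkla
      rw [if_pos (show ({x, y} : Finset ι).image b = ({k, l} : Finset (Fin n)) by
            rw [himg, ← habs, h1, h2]),
        Finset.card_insert_of_notMem (fun hc => hnotin (Finset.mem_filter.mp hc).1),
        hcond k l hkl, if_pos hkla, h1, h2]
      omega
    · rw [if_neg (hpredne k l hkl hkla), hcond k l hkl, if_neg hkla]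
  · intro P hP
    exact Finset.insert_erase (Finset.mem_filter.mp hP).2
  · intro Q hQ
    rw [Finset.mem_filter, mem_pairings] at hQ
    exact Finset.erase_insert (not_mem_of_pairing_sdiff hQ.1 ⟨x, by simp⟩)

lemma prod_pull {β : Type*} [Fintype β] [DecidableEq β] (f g : β → ℚ) (k : β)
    (h : ∀ j, j ≠ k → f j = g j) : (∏ j, f j) * g k = (∏ j, g j) * f k := by
  rw [← Finset.mul_prod_erase Finset.univ f (Finset.mem_univ k),
      ← Finset.mul_prod_erase Finset.univ g (Finset.mem_univ k),
      Finset.prod_congr rfl (fun j hj => h j (Finset.ne_of_mem_erase hj))]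
  ring

lemma prod_pull2 {β : Type*} [Fintype β] [DecidableEq β] (f g : β → ℚ) (k l : β) (hkl : k ≠ l)
    (h : ∀ j, j ≠ k → j ≠ l → f j = g j) :
    (∏ j, f j) * (g k * g l) = (∏ j, g j) * (f k * f l) := by
  have hl : l ∈ Finset.univ.erase k := Finset.mem_erase.mpr ⟨hkl.symm, Finset.mem_univ l⟩
  rw [← Finset.mul_prod_erase Finset.univ f (Finset.mem_univ k),
      ← Finset.mul_prod_erase Finset.univ g (Finset.mem_univ k),
      ← Finset.mul_prod_erase _ f hl, ← Finset.mul_prod_erase _ g hl,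
      Finset.prod_congr rfl (fun j hj => h j (Finset.ne_of_mem_erase (Finset.mem_of_mem_erase hj))
        (Finset.ne_of_mem_erase hj))]
  ring

lemma sum_pull {β : Type*} [Fintype β] [DecidableEq β] (f g : β → ℕ) (k : β)
    (h : ∀ j, j ≠ k → f j = g j) : (∑ j, f j) + g k = (∑ j, g j) + f k := by
  rw [← Finset.add_sum_erase Finset.univ f (Finset.mem_univ k),
      ← Finset.add_sum_erase Finset.univ g (Finset.mem_univ k),
      Finset.sum_congr rfl (fun j hj => h j (Finset.ne_of_mem_erase hj))]
  ring

open Classical in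
lemma general_empty {n : ℕ} (b : ι → Fin n) (M : Matrix (Fin n) (Fin n) ℕ)
    (hdeg : ∀ j : Fin n, (∑ a, M a j) + (∑ c, M j c)
      = ((∅ : Finset ι).filter fun z => b z = j).card) :
    ((((pairings (∅ : Finset ι)).filter fun P => ∀ k l : Fin n, k ≤ l →
        (P.filter fun p => p.image b = ({k, l} : Finset (Fin n))).card = M k l).card : ℚ)) =
      (∏ j, (((∅ : Finset ι).filter fun z => b z = j).card.factorial : ℚ)) /
        ((2 : ℚ) ^ (∑ j, M j j) * ∏ a, ∏ c, ((M a c).factorial : ℚ)) := by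
  have hM0 : ∀ a c, M a c = 0 := by
    intro a c
    have h := hdeg c
    simp only [Finset.filter_empty, Finset.card_empty] at h
    have h2 : ∑ a', M a' c = 0 := by omega
    exact (Finset.sum_eq_zero_iff.mp h2) a (Finset.mem_univ a)
  have hpe : pairings (∅ : Finset ι) = {∅} := by
    ext P
    rw [mem_pairings, Finset.mem_singleton]
    constructor
    · intro h
      by_contra hne
      obtain ⟨p, hp⟩ := Finset.nonempty_iff_ne_empty.mpr hne
      have h2 := h.1 p hp
      have hsub : p ⊆ (∅ : Finset ι) := fun z hz =>
        h.2.2 ▸ Finset.mem_biUnion.mpr ⟨p, hp, hz⟩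
      have := Finset.card_le_card hsub
      simp [h2] at this
    · rintro rfl
      exact ⟨by simp, by simp, by simp⟩
  rw [hpe]
  rw [Finset.filter_singleton, if_pos (by intro k l _; simp [hM0])]
  simp [hM0]

set_option maxHeartbeats 1000000 in
open Classical in
lemma step_val {n : ℕ} (b : ι → Fin n) (N : ℕ)
    (ih : ∀ (O : Finset ι), O.card ≤ N → ∀ (M : Matrix (Fin n) (Fin n) ℕ),
      (∀ (k l : Fin n), l < k → M k l = 0) →
      (∀ (j : Fin n), ∑ a : Fin n, M a j + ∑ c : Fin n, M j c
        = (Finset.filter (fun z => b z = j) O).card) →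
      ((Finset.filter (fun P => ∀ (k l : Fin n), k ≤ l →
          (Finset.filter (fun p => Finset.image b p = {k, l}) P).card = M k l)
        (pairings O)).card : ℚ) =
        (∏ j : Fin n, ((Finset.filter (fun z => b z = j) O).card.factorial : ℚ)) /
          ((2 ^ ∑ j : Fin n, M j j) * ∏ a : Fin n, ∏ c : Fin n, ((M a c).factorial : ℚ)))
    (O : Finset ι) (hN : O.card ≤ N + 1) (M : Matrix (Fin n) (Fin n) ℕ)
    (hupper : ∀ (k l : Fin n), l < k → M k l = 0)
    (hdeg : ∀ (j : Fin n), ∑ a : Fin n, M a j + ∑ c : Fin n, M j c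
      = (Finset.filter (fun z => b z = j) O).card)
    {x y : ι} (hx : x ∈ O) (hy : y ∈ O.erase x) :
    (((Finset.filter (fun P => ∀ (k l : Fin n), k ≤ l →
          (Finset.filter (fun p => Finset.image b p = {k, l}) P).card = M k l)
        (pairings O)).filter fun P => ({x, y} : Finset ι) ∈ P).card : ℚ)
      = ((∏ j : Fin n, ((Finset.filter (fun z => b z = j) O).card.factorial : ℚ)) /
          ((2 ^ ∑ j : Fin n, M j j) * ∏ a : Fin n, ∏ c : Fin n, ((M a c).factorial : ℚ)))
        * ((if b y = b x then 2 * M (b x) (b x) else M (min (b x) (b y)) (max (b x) (b y)) : ℕ) : ℚ)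
        / (((Finset.filter (fun z => b z = b x) O).card : ℚ)
            * ((Finset.filter (fun z => b z = b y) (O.erase x)).card : ℚ)) := by
  have hyx : y ≠ x := (Finset.mem_erase.mp hy).1
  have hyO : y ∈ O := (Finset.mem_erase.mp hy).2
  have hxy : x ≠ y := hyx.symm
  have hab : (min (b x) (b y)) ≤ (max (b x) (b y)) := min_le_max
  have habs : ({(min (b x) (b y)), (max (b x) (b y))} : Finset (Fin n)) = {b x, b y} := pair_min_max _ _
  rcases Nat.eq_zero_or_pos (M (min (b x) (b y)) (max (b x) (b y))) with h0 | hpos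
  · rw [count_zero b O M hab habs h0]
    have hW0 : (if b y = b x then 2 * M (b x) (b x) else M (min (b x) (b y)) (max (b x) (b y))) = 0 := by
      by_cases hl : b y = b x
      · rw [if_pos hl]
        rw [hl, min_self, max_self] at h0
        omega
      · rw [if_neg hl]; exact h0
    rw [hW0]
    simp
  · obtain ⟨m, hm⟩ := Nat.exists_eq_succ_of_ne_zero (Nat.pos_iff_ne_zero.mp hpos)
    rw [count_step b O M hx hyO hxy hab habs hpos]
    -- the reduced matrix
    have hcard' : (O \ {x, y}).card ≤ N := by
      have h1 : O \ {x, y} ⊆ O.erase x := by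
        intro z hz
        rw [Finset.mem_sdiff] at hz
        rw [Finset.mem_erase]
        exact ⟨fun e => hz.2 (by simp [e]), hz.1⟩
      have h2 := Finset.card_le_card h1
      rw [Finset.card_erase_of_mem hx] at h2
      have h3 : 1 ≤ O.card := Finset.card_pos.mpr ⟨x, hx⟩
      omega
    have hupper' : ∀ (k l : Fin n), l < k →
        (if (k, l) = ((min (b x) (b y)), (max (b x) (b y))) then M (min (b x) (b y)) (max (b x) (b y)) - 1 else M k l) = 0 := by
      intro k l hlk
      rw [if_neg, hupper k l hlk]
      intro he
      have h1 : k = (min (b x) (b y)) := congrArg Prod.fst he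
      have h2 : l = (max (b x) (b y)) := congrArg Prod.snd he
      rw [h1, h2] at hlk
      exact absurd hab (not_le.mpr hlk)
    have hcol : ∀ j : Fin n,
        (∑ a, (if (a, j) = ((min (b x) (b y)), (max (b x) (b y))) then M (min (b x) (b y)) (max (b x) (b y)) - 1 else M a j))
          + (if (max (b x) (b y)) = j then 1 else 0) = ∑ a, M a j := by
      intro j
      by_cases hj : (max (b x) (b y)) = j
      · rw [if_pos hj, ← hj]
        have hp := sum_pull (fun a => M a (max (b x) (b y)))
          (fun a => (if (a, (max (b x) (b y))) = ((min (b x) (b y)), (max (b x) (b y))) then M (min (b x) (b y)) (max (b x) (b y)) - 1 else M a (max (b x) (b y)))) (min (b x) (b y))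
          (fun a ha => by beta_reduce; rw [if_neg (fun he => ha (congrArg Prod.fst he))])
        simp at hp
        simp only [Prod.mk.injEq, eq_self_iff_true, and_true, true_and]
        omega
      · rw [if_neg hj, add_zero]
        refine Finset.sum_congr rfl (fun a _ => ?_)
        rw [if_neg (fun he => hj (congrArg Prod.snd he).symm)]
    have hrow : ∀ j : Fin n,
        (∑ c, (if (j, c) = ((min (b x) (b y)), (max (b x) (b y))) then M (min (b x) (b y)) (max (b x) (b y)) - 1 else M j c))
          + (if (min (b x) (b y)) = j then 1 else 0) = ∑ c, M j c := by
      intro j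
      by_cases hj : (min (b x) (b y)) = j
      · rw [if_pos hj, ← hj]
        have hp := sum_pull (fun c => M (min (b x) (b y)) c)
          (fun c => (if ((min (b x) (b y)), c) = ((min (b x) (b y)), (max (b x) (b y))) then M (min (b x) (b y)) (max (b x) (b y)) - 1 else M (min (b x) (b y)) c)) (max (b x) (b y))
          (fun c hc => by beta_reduce; rw [if_neg (fun he => hc (congrArg Prod.snd he))])
        simp at hp
        simp only [Prod.mk.injEq, eq_self_iff_true, and_true, true_and]
        omega
      · rw [if_neg hj, add_zero]
        refine Finset.sum_congr rfl (fun c _ => ?_)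
        rw [if_neg (fun he => hj (congrArg Prod.fst he).symm)]
    have hcntO' : ∀ j : Fin n,
        ((O \ {x, y}).filter fun z => b z = j).card
          + (if b x = j then 1 else 0) + (if b y = j then 1 else 0)
          = (O.filter fun z => b z = j).card := by
      intro j
      have he : O \ {x, y} = (O.erase x).erase y := by
        ext z
        simp only [Finset.mem_sdiff, Finset.mem_erase, Finset.mem_insert,
          Finset.mem_singleton]
        tauto
      have h1 := cnt_erase (Finset.mem_erase.mpr ⟨hyx, hyO⟩) (fun z => b z = j)
      have h2 := cnt_erase hx (fun z => b z = j)
      rw [he]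
      omega
    have hdelta : ∀ j : Fin n,
        (if b x = j then 1 else 0) + (if b y = j then 1 else 0)
          = (if (min (b x) (b y)) = j then 1 else 0) + (if (max (b x) (b y)) = j then 1 else 0) := by
      intro j
      rcases le_total (b x) (b y) with h | h
      · rw [min_eq_left h, max_eq_right h]
      · rw [min_eq_right h, max_eq_left h]
        omega
    have hdeg' : ∀ j : Fin n,
        (∑ a, (if (a, j) = ((min (b x) (b y)), (max (b x) (b y))) then M (min (b x) (b y)) (max (b x) (b y)) - 1 else M a j))
          + (∑ c, (if (j, c) = ((min (b x) (b y)), (max (b x) (b y))) then M (min (b x) (b y)) (max (b x) (b y)) - 1 else M j c))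
          = ((O \ {x, y}).filter fun z => b z = j).card := by
      intro j
      have e1 := hcol j
      have e2 := hrow j
      have e3 := hcntO' j
      have e4 := hdelta j
      have e5 := hdeg j
      omega
    have hIH := ih (O \ {x, y}) hcard'
      (fun i j => if (i, j) = ((min (b x) (b y)), (max (b x) (b y))) then M (min (b x) (b y)) (max (b x) (b y)) - 1 else M i j)
      hupper' hdeg'
    beta_reduce at hIH
    refine (Eq.trans (by congr!) hIH).trans ?_
    by_cases hl : b y = b x
    ·
      rw [hl]
      simp only [min_self, max_self]
      rw [hl] at hpos
      simp only [min_self, max_self] at hpos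
      simp only [eq_self_iff_true, if_true]
      -- count facts
      have h1 := hcntO' (b x)
      rw [hl] at h1
      simp only [eq_self_iff_true, if_true] at h1
      have hco : ∀ j, j ≠ b x →
          ((O \ {x, y}).filter fun z => b z = j).card = (O.filter fun z => b z = j).card := by
        intro j hj
        have h2 := hcntO' j
        rw [hl] at h2
        rw [if_neg (show ¬(b x = j) from fun e => hj e.symm)] at h2
        omega
      have hcnteq : (O.filter fun z => b z = b x).card
          = ((O \ {x, y}).filter fun z => b z = b x).card + 2 := by omega
      have h3 := cnt_erase hx (fun z => b z = b x)
      simp only [eq_self_iff_true, if_true] at h3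
      -- trace
      have htr := sum_pull (fun j => M j j)
        (fun j => if (j, j) = (b x, b x) then M (b x) (b x) - 1 else M j j) (b x)
        (fun j hj => by
          beta_reduce
          rw [if_neg (fun he => hj (congrArg Prod.fst he))])
      beta_reduce at htr
      simp only [eq_self_iff_true, if_true] at htr
      have hF1 : (∑ j, M j j)
          = (∑ j, if (j, j) = (b x, b x) then M (b x) (b x) - 1 else M j j) + 1 := by omega
      have hpos2 : 0 < M (b x) (b x) := hpos

      have hp1 := prod_pull (fun a => ∏ c, ((M a c).factorial : ℚ))
        (fun a => ∏ c, (((if (a, c) = ((b x), (b x)) then M (b x) (b x) - 1 else M a c)).factorial : ℚ))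
        (b x) (fun a ha => by
          beta_reduce
          refine Finset.prod_congr rfl (fun c _ => ?_)
          rw [if_neg (fun he => ha (congrArg Prod.fst he))])
      beta_reduce at hp1
      have hp2 := prod_pull (fun c => ((M (b x) c).factorial : ℚ))
        (fun c => (((if ((b x), c) = ((b x), (b x)) then M (b x) (b x) - 1 else M (b x) c)).factorial : ℚ))
        (b x) (fun c hc => by
          beta_reduce
          rw [if_neg (fun he => hc (congrArg Prod.snd he))])
      beta_reduce at hp2
      rw [show (if ((b x), (b x)) = ((b x), (b x)) then M (b x) (b x) - 1 else M (b x) (b x))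
          = M (b x) (b x) - 1 from if_pos rfl] at hp2
      have hww : ((M (b x) (b x)).factorial : ℚ)
          = (M (b x) (b x) : ℚ) * ((M (b x) (b x) - 1).factorial : ℚ) := by
        exact_mod_cast (Nat.mul_factorial_pred hpos2.ne').symm
      have hgA0 : (∏ c, (((if ((b x), c) = ((b x), (b x)) then M (b x) (b x) - 1 else M (b x) c)).factorial : ℚ)) ≠ 0 :=
        ne_of_gt (Finset.prod_pos (fun c _ => by positivity))
      have hmf : ((M (b x) (b x) - 1).factorial : ℚ) ≠ 0 :=
        Nat.cast_ne_zero.mpr (Nat.factorial_ne_zero _)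
      have hF2 : (∏ a, ∏ c, ((M a c).factorial : ℚ))
          = (M (b x) (b x) : ℚ) * ∏ a, ∏ c,
              (((if (a, c) = ((b x), (b x)) then M (b x) (b x) - 1 else M a c)).factorial : ℚ) := by
        apply mul_right_cancel₀ (mul_ne_zero hgA0 hmf)
        calc (∏ a, ∏ c, ((M a c).factorial : ℚ))
              * ((∏ c, (((if ((b x), c) = ((b x), (b x)) then M (b x) (b x) - 1 else M (b x) c)).factorial : ℚ))
                * ((M (b x) (b x) - 1).factorial : ℚ))
            = ((∏ a, ∏ c, ((M a c).factorial : ℚ))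
                * ∏ c, (((if ((b x), c) = ((b x), (b x)) then M (b x) (b x) - 1 else M (b x) c)).factorial : ℚ))
                * ((M (b x) (b x) - 1).factorial : ℚ) := by ring
          _ = ((∏ a, ∏ c, (((if (a, c) = ((b x), (b x)) then M (b x) (b x) - 1 else M a c)).factorial : ℚ))
                * ∏ c, ((M (b x) c).factorial : ℚ)) * ((M (b x) (b x) - 1).factorial : ℚ) := by rw [hp1]
          _ = (∏ a, ∏ c, (((if (a, c) = ((b x), (b x)) then M (b x) (b x) - 1 else M a c)).factorial : ℚ))
                * ((∏ c, ((M (b x) c).factorial : ℚ)) * ((M (b x) (b x) - 1).factorial : ℚ)) := by ring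
          _ = (∏ a, ∏ c, (((if (a, c) = ((b x), (b x)) then M (b x) (b x) - 1 else M a c)).factorial : ℚ))
                * ((∏ c, (((if ((b x), c) = ((b x), (b x)) then M (b x) (b x) - 1 else M (b x) c)).factorial : ℚ))
                  * ((M (b x) (b x)).factorial : ℚ)) := by rw [hp2]
          _ = _ := by rw [hww]; ring

      -- factorial product over blocks
      have hq := prod_pull (fun j => (((O.filter fun z => b z = j).card).factorial : ℚ))
        (fun j => ((((O \ {x, y}).filter fun z => b z = j).card).factorial : ℚ)) (b x)
        (fun j hj => by beta_reduce; rw [hco j hj])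
      beta_reduce at hq
      rw [hcnteq] at hq
      have hfe : (((O \ {x, y}).filter fun z => b z = b x).card + 2).factorial
          = (((O \ {x, y}).filter fun z => b z = b x).card + 2)
            * ((((O \ {x, y}).filter fun z => b z = b x).card + 1)
              * (((O \ {x, y}).filter fun z => b z = b x).card).factorial) := by
        rw [show ((O \ {x, y}).filter fun z => b z = b x).card + 2
            = (((O \ {x, y}).filter fun z => b z = b x).card + 1) + 1 from rfl,
          Nat.factorial_succ, Nat.factorial_succ]
      rw [hfe] at hq
      have hfne : ((((O \ {x, y}).filter fun z => b z = b x).card).factorial : ℚ) ≠ 0 :=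
        Nat.cast_ne_zero.mpr (Nat.factorial_ne_zero _)
      have hF3 : (∏ j, (((O.filter fun z => b z = j).card).factorial : ℚ))
          = (∏ j, ((((O \ {x, y}).filter fun z => b z = j).card).factorial : ℚ))
            * ((((O \ {x, y}).filter fun z => b z = b x).card : ℚ) + 2)
            * ((((O \ {x, y}).filter fun z => b z = b x).card : ℚ) + 1) := by
        apply mul_right_cancel₀ hfne
        rw [hq]
        push_cast
        ring
      have hF4 : ((O.filter fun z => b z = b x).card : ℚ)
          = (((O \ {x, y}).filter fun z => b z = b x).card : ℚ) + 2 := by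
        rw [hcnteq]; push_cast; ring
      have hF5 : (((O.erase x).filter fun z => b z = b x).card : ℚ)
          = (((O \ {x, y}).filter fun z => b z = b x).card : ℚ) + 1 := by
        have : ((O.erase x).filter fun z => b z = b x).card
            = ((O \ {x, y}).filter fun z => b z = b x).card + 1 := by omega
        rw [this]; push_cast; ring
      rw [hF1, pow_succ, hF2, hF3, hF4, hF5]
      have hn1 : ((2 : ℚ) ^ (∑ j, if (j, j) = (b x, b x) then M (b x) (b x) - 1 else M j j)) ≠ 0 := by
        positivity
      have hn2 : (∏ a, ∏ c,
          (((if (a, c) = (b x, b x) then M (b x) (b x) - 1 else M a c)).factorial : ℚ)) ≠ 0 :=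
        ne_of_gt (Finset.prod_pos (fun a _ => Finset.prod_pos (fun c _ => by positivity)))
      have hn3 : ((M (b x) (b x) : ℚ)) ≠ 0 :=
        Nat.cast_ne_zero.mpr (Nat.pos_iff_ne_zero.mp hpos2)
      have hn4 : ((((O \ {x, y}).filter fun z => b z = b x).card : ℚ) + 2) ≠ 0 := by
        intro hc
        have hnn := Nat.cast_nonneg (α := ℚ) (((O \ {x, y}).filter fun z => b z = b x).card)
        linarith
      have hn5 : ((((O \ {x, y}).filter fun z => b z = b x).card : ℚ) + 1) ≠ 0 := by
        intro hc
        have hnn := Nat.cast_nonneg (α := ℚ) (((O \ {x, y}).filter fun z => b z = b x).card)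
        linarith
      push_cast
      field_simp
    ·
      rw [if_neg hl]
      have hbxy : b x ≠ b y := fun e => hl e.symm
      have hABne : (min (b x) (b y)) ≠ (max (b x) (b y)) := ne_of_lt (min_lt_max.mpr hbxy)
      -- count facts
      have h1 := hcntO' (b x)
      rw [if_pos rfl, if_neg hl] at h1
      have h2 := hcntO' (b y)
      rw [if_neg hbxy, if_pos rfl] at h2
      have hco : ∀ j, j ≠ b x → j ≠ b y →
          ((O \ {x, y}).filter fun z => b z = j).card = (O.filter fun z => b z = j).card := by
        intro j hj1 hj2
        have h3 := hcntO' j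
        rw [if_neg (fun e => hj1 e.symm), if_neg (fun e => hj2 e.symm)] at h3
        omega
      have h3 := cnt_erase hx (fun z => b z = b y)
      rw [if_neg hbxy] at h3
      -- trace unchanged
      have hG1 : (∑ j, if (j, j) = ((min (b x) (b y)), (max (b x) (b y)))
            then M (min (b x) (b y)) (max (b x) (b y)) - 1 else M j j) = ∑ j, M j j :=
        Finset.sum_congr rfl (fun j _ => by
          rw [if_neg (fun he => hABne (((congrArg Prod.fst he).symm).trans (congrArg Prod.snd he)))])

      have hp1 := prod_pull (fun a => ∏ c, ((M a c).factorial : ℚ))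
        (fun a => ∏ c, (((if (a, c) = ((min (b x) (b y)), (max (b x) (b y))) then M (min (b x) (b y)) (max (b x) (b y)) - 1 else M a c)).factorial : ℚ))
        (min (b x) (b y)) (fun a ha => by
          beta_reduce
          refine Finset.prod_congr rfl (fun c _ => ?_)
          rw [if_neg (fun he => ha (congrArg Prod.fst he))])
      beta_reduce at hp1
      have hp2 := prod_pull (fun c => ((M (min (b x) (b y)) c).factorial : ℚ))
        (fun c => (((if ((min (b x) (b y)), c) = ((min (b x) (b y)), (max (b x) (b y))) then M (min (b x) (b y)) (max (b x) (b y)) - 1 else M (min (b x) (b y)) c)).factorial : ℚ))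
        (max (b x) (b y)) (fun c hc => by
          beta_reduce
          rw [if_neg (fun he => hc (congrArg Prod.snd he))])
      beta_reduce at hp2
      rw [show (if ((min (b x) (b y)), (max (b x) (b y))) = ((min (b x) (b y)), (max (b x) (b y)))
            then M (min (b x) (b y)) (max (b x) (b y)) - 1 else M (min (b x) (b y)) (max (b x) (b y)))
          = M (min (b x) (b y)) (max (b x) (b y)) - 1 from if_pos rfl] at hp2
      have hww : ((M (min (b x) (b y)) (max (b x) (b y))).factorial : ℚ)
          = (M (min (b x) (b y)) (max (b x) (b y)) : ℚ) * ((M (min (b x) (b y)) (max (b x) (b y)) - 1).factorial : ℚ) := by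
        exact_mod_cast (Nat.mul_factorial_pred hpos.ne').symm
      have hgA0 : (∏ c, (((if ((min (b x) (b y)), c) = ((min (b x) (b y)), (max (b x) (b y))) then M (min (b x) (b y)) (max (b x) (b y)) - 1 else M (min (b x) (b y)) c)).factorial : ℚ)) ≠ 0 :=
        ne_of_gt (Finset.prod_pos (fun c _ => by positivity))
      have hmf : ((M (min (b x) (b y)) (max (b x) (b y)) - 1).factorial : ℚ) ≠ 0 :=
        Nat.cast_ne_zero.mpr (Nat.factorial_ne_zero _)
      have hG2 : (∏ a, ∏ c, ((M a c).factorial : ℚ))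
          = (M (min (b x) (b y)) (max (b x) (b y)) : ℚ) * ∏ a, ∏ c,
              (((if (a, c) = ((min (b x) (b y)), (max (b x) (b y))) then M (min (b x) (b y)) (max (b x) (b y)) - 1 else M a c)).factorial : ℚ) := by
        apply mul_right_cancel₀ (mul_ne_zero hgA0 hmf)
        calc (∏ a, ∏ c, ((M a c).factorial : ℚ))
              * ((∏ c, (((if ((min (b x) (b y)), c) = ((min (b x) (b y)), (max (b x) (b y))) then M (min (b x) (b y)) (max (b x) (b y)) - 1 else M (min (b x) (b y)) c)).factorial : ℚ))
                * ((M (min (b x) (b y)) (max (b x) (b y)) - 1).factorial : ℚ))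
            = ((∏ a, ∏ c, ((M a c).factorial : ℚ))
                * ∏ c, (((if ((min (b x) (b y)), c) = ((min (b x) (b y)), (max (b x) (b y))) then M (min (b x) (b y)) (max (b x) (b y)) - 1 else M (min (b x) (b y)) c)).factorial : ℚ))
                * ((M (min (b x) (b y)) (max (b x) (b y)) - 1).factorial : ℚ) := by ring
          _ = ((∏ a, ∏ c, (((if (a, c) = ((min (b x) (b y)), (max (b x) (b y))) then M (min (b x) (b y)) (max (b x) (b y)) - 1 else M a c)).factorial : ℚ))
                * ∏ c, ((M (min (b x) (b y)) c).factorial : ℚ)) * ((M (min (b x) (b y)) (max (b x) (b y)) - 1).factorial : ℚ) := by rw [hp1]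
          _ = (∏ a, ∏ c, (((if (a, c) = ((min (b x) (b y)), (max (b x) (b y))) then M (min (b x) (b y)) (max (b x) (b y)) - 1 else M a c)).factorial : ℚ))
                * ((∏ c, ((M (min (b x) (b y)) c).factorial : ℚ)) * ((M (min (b x) (b y)) (max (b x) (b y)) - 1).factorial : ℚ)) := by ring
          _ = (∏ a, ∏ c, (((if (a, c) = ((min (b x) (b y)), (max (b x) (b y))) then M (min (b x) (b y)) (max (b x) (b y)) - 1 else M a c)).factorial : ℚ))
                * ((∏ c, (((if ((min (b x) (b y)), c) = ((min (b x) (b y)), (max (b x) (b y))) then M (min (b x) (b y)) (max (b x) (b y)) - 1 else M (min (b x) (b y)) c)).factorial : ℚ))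
                  * ((M (min (b x) (b y)) (max (b x) (b y))).factorial : ℚ)) := by rw [hp2]
          _ = _ := by rw [hww]; ring

      -- factorial product over blocks
      have hq := prod_pull2 (fun j => (((O.filter fun z => b z = j).card).factorial : ℚ))
        (fun j => ((((O \ {x, y}).filter fun z => b z = j).card).factorial : ℚ)) (b x) (b y) hbxy
        (fun j hj1 hj2 => by beta_reduce; rw [hco j hj1 hj2])
      beta_reduce at hq
      have hcnteq1 : (O.filter fun z => b z = b x).card
          = ((O \ {x, y}).filter fun z => b z = b x).card + 1 := by omega
      have hcnteq2 : (O.filter fun z => b z = b y).card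
          = ((O \ {x, y}).filter fun z => b z = b y).card + 1 := by omega
      rw [hcnteq1, hcnteq2, Nat.factorial_succ, Nat.factorial_succ] at hq
      have hfne : (((((O \ {x, y}).filter fun z => b z = b x).card).factorial : ℚ)
          * ((((O \ {x, y}).filter fun z => b z = b y).card).factorial : ℚ)) ≠ 0 :=
        mul_ne_zero (Nat.cast_ne_zero.mpr (Nat.factorial_ne_zero _))
          (Nat.cast_ne_zero.mpr (Nat.factorial_ne_zero _))
      have hG3 : (∏ j, (((O.filter fun z => b z = j).card).factorial : ℚ))
          = (∏ j, ((((O \ {x, y}).filter fun z => b z = j).card).factorial : ℚ))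
            * ((((O \ {x, y}).filter fun z => b z = b x).card : ℚ) + 1)
            * ((((O \ {x, y}).filter fun z => b z = b y).card : ℚ) + 1) := by
        apply mul_right_cancel₀ hfne
        rw [hq]
        push_cast
        ring
      have hG4 : ((O.filter fun z => b z = b x).card : ℚ)
          = (((O \ {x, y}).filter fun z => b z = b x).card : ℚ) + 1 := by
        rw [hcnteq1]; push_cast; ring
      have hG5 : (((O.erase x).filter fun z => b z = b y).card : ℚ)
          = (((O \ {x, y}).filter fun z => b z = b y).card : ℚ) + 1 := by
        have : ((O.erase x).filter fun z => b z = b y).card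
            = ((O \ {x, y}).filter fun z => b z = b y).card + 1 := by omega
        rw [this]; push_cast; ring
      rw [hG1, hG2, hG3, hG4, hG5]
      have hn1 : ((2 : ℚ) ^ (∑ j, M j j)) ≠ 0 := by positivity
      have hn2 : (∏ a, ∏ c,
          (((if (a, c) = ((min (b x) (b y)), (max (b x) (b y)))
            then M (min (b x) (b y)) (max (b x) (b y)) - 1 else M a c)).factorial : ℚ)) ≠ 0 :=
        ne_of_gt (Finset.prod_pos (fun a _ => Finset.prod_pos (fun c _ => by positivity)))
      have hn3 : ((M (min (b x) (b y)) (max (b x) (b y)) : ℚ)) ≠ 0 :=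
        Nat.cast_ne_zero.mpr (Nat.pos_iff_ne_zero.mp hpos)
      have hn4 : ((((O \ {x, y}).filter fun z => b z = b x).card : ℚ) + 1) ≠ 0 := by
        intro hc
        have hnn := Nat.cast_nonneg (α := ℚ) (((O \ {x, y}).filter fun z => b z = b x).card)
        linarith
      have hn5 : ((((O \ {x, y}).filter fun z => b z = b y).card : ℚ) + 1) ≠ 0 := by
        intro hc
        have hnn := Nat.cast_nonneg (α := ℚ) (((O \ {x, y}).filter fun z => b z = b y).card)
        linarith
      field_simp

open Classical in
lemma general {n : ℕ} (N : ℕ) (b : ι → Fin n) (O : Finset ι)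
    (hN : O.card ≤ N) (M : Matrix (Fin n) (Fin n) ℕ)
    (hupper : ∀ k l : Fin n, l < k → M k l = 0)
    (hdeg : ∀ j : Fin n, (∑ a, M a j) + (∑ c, M j c) = (O.filter fun z => b z = j).card) :
    ((((pairings O).filter fun P => ∀ k l : Fin n, k ≤ l →
        (P.filter fun p => p.image b = ({k, l} : Finset (Fin n))).card = M k l).card : ℚ)) =
      (∏ j, ((O.filter fun z => b z = j).card.factorial : ℚ)) /
        ((2 : ℚ) ^ (∑ j, M j j) * ∏ a, ∏ c, ((M a c).factorial : ℚ)) := by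
  induction N generalizing O M with
  | zero =>
    have hO : O = ∅ := Finset.card_eq_zero.mp (Nat.le_zero.mp hN)
    subst hO
    exact general_empty b M hdeg
  | succ N ih =>
    rcases Finset.eq_empty_or_nonempty O with rfl | ⟨x, hx⟩
    · exact general_empty b M hdeg
    · -- inductive step
      have hcover : (Finset.filter (fun P => ∀ (k l : Fin n), k ≤ l → (Finset.filter (fun p => Finset.image b p = {k, l}) P).card = M k l) (pairings O))
          = (O.erase x).biUnion (fun y => Finset.filter (fun P => ({x, y} : Finset ι) ∈ P) (Finset.filter (fun P => ∀ (k l : Fin n), k ≤ l → (Finset.filter (fun p => Finset.image b p = {k, l}) P).card = M k l) (pairings O))) := by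
        ext P
        simp only [Finset.mem_biUnion]
        constructor
        · intro hP
          have hpair : IsPairing O P := mem_pairings.mp (Finset.mem_filter.mp hP).1
          obtain ⟨y, hyx, hyP⟩ := exists_partner hpair hx
          have hyO : y ∈ O := by
            rw [← hpair.2.2]
            exact Finset.mem_biUnion.mpr ⟨{x, y}, hyP, by simp⟩
          exact ⟨y, Finset.mem_erase.mpr ⟨hyx, hyO⟩, Finset.mem_filter.mpr ⟨hP, hyP⟩⟩
        · rintro ⟨y, _, hPy⟩
          exact (Finset.mem_filter.mp hPy).1
      have hdisjT : ∀ y ∈ O.erase x, ∀ y' ∈ O.erase x, y ≠ y' →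
          Disjoint (Finset.filter (fun P => ({x, y} : Finset ι) ∈ P) (Finset.filter (fun P => ∀ (k l : Fin n), k ≤ l → (Finset.filter (fun p => Finset.image b p = {k, l}) P).card = M k l) (pairings O)))
            (Finset.filter (fun P => ({x, y'} : Finset ι) ∈ P) (Finset.filter (fun P => ∀ (k l : Fin n), k ≤ l → (Finset.filter (fun p => Finset.image b p = {k, l}) P).card = M k l) (pairings O))) := by
        intro y hy y' hy' hne
        rw [Finset.disjoint_left]
        intro P hPy hPy'
        have hpair : IsPairing O P := mem_pairings.mp
          (Finset.mem_filter.mp (Finset.mem_filter.mp hPy).1).1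
        have h1 := (Finset.mem_filter.mp hPy).2
        have h2 := (Finset.mem_filter.mp hPy').2
        exact hne (partner_unique hpair.2.1 h2 h1 (Finset.mem_erase.mp hy).1)
      rw [hcover, Finset.card_biUnion hdisjT, Nat.cast_sum]
      have hval : ∀ y ∈ O.erase x,
          (((Finset.filter (fun P => ({x, y} : Finset ι) ∈ P) (Finset.filter (fun P => ∀ (k l : Fin n), k ≤ l → (Finset.filter (fun p => Finset.image b p = {k, l}) P).card = M k l) (pairings O))).card : ℚ))
            = ((∏ j : Fin n, ((Finset.filter (fun z => b z = j) O).card.factorial : ℚ)) / ((2 ^ ∑ j : Fin n, M j j) * ∏ a : Fin n, ∏ c : Fin n, ((M a c).factorial : ℚ))) * (((if (b y) = b x then 2 * M (b x) (b x) else M (min (b x) (b y)) (max (b x) (b y))) : ℕ) : ℚ) / (((Finset.filter (fun z => b z = b x) O).card : ℚ) * ((Finset.filter (fun z => b z = (b y)) (O.erase x)).card : ℚ)) :=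
        fun y hy => step_val b N (fun O hO M h1 h2 => ih O hO M h1 h2) O hN M hupper hdeg hx hy
      have hckpos : 0 < (Finset.filter (fun z => b z = b x) O).card :=
        Finset.card_pos.mpr ⟨x, Finset.mem_filter.mpr ⟨hx, rfl⟩⟩
      have hWzero : ∀ l : Fin n, (Finset.filter (fun z => b z = l) (O.erase x)).card = 0 →
          (if l = b x then 2 * M (b x) (b x) else M (min (b x) l) (max (b x) l)) = 0 := by
        intro l h0
        by_cases hl : l = b x
        · rw [if_pos hl]
          rw [hl] at h0
          have h3 := cnt_erase hx (fun z => b z = b x)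
          simp only [eq_self_iff_true, if_true] at h3
          have h4 := hdeg (b x)
          have h5 : M (b x) (b x) ≤ ∑ a, M a (b x) :=
            Finset.single_le_sum (fun a _ => Nat.zero_le (M a (b x))) (Finset.mem_univ (b x))
          have h6 : M (b x) (b x) ≤ ∑ c, M (b x) c :=
            Finset.single_le_sum (fun c _ => Nat.zero_le (M (b x) c)) (Finset.mem_univ (b x))
          omega
        · rw [if_neg hl]
          have h3 := cnt_erase hx (fun z => b z = l)
          rw [if_neg (fun e => hl e.symm)] at h3
          have h4 := hdeg l
          rcases le_total (b x) l with h | h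
          · rw [min_eq_left h, max_eq_right h]
            have h5 : M (b x) l ≤ ∑ a, M a l :=
              Finset.single_le_sum (fun a _ => Nat.zero_le (M a l)) (Finset.mem_univ (b x))
            omega
          · rw [min_eq_right h, max_eq_left h]
            have h5 : M l (b x) ≤ ∑ c, M l c :=
              Finset.single_le_sum (fun c _ => Nat.zero_le (M l c)) (Finset.mem_univ (b x))
            omega
      have hWsum : (∑ l : Fin n, (if l = b x then 2 * M (b x) (b x) else M (min (b x) l) (max (b x) l))) = (Finset.filter (fun z => b z = b x) O).card := by
        have hWl : ∀ l : Fin n, l ≠ b x → (if l = b x then 2 * M (b x) (b x) else M (min (b x) l) (max (b x) l)) = M l (b x) + M (b x) l := by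
          intro l hl
          rw [if_neg hl]
          rcases lt_or_gt_of_ne hl with h | h
          · rw [min_eq_right h.le, max_eq_left h.le, hupper (b x) l h]
            omega
          · rw [min_eq_left h.le, max_eq_right h.le, hupper l (b x) h]
            omega
        have e1 := Finset.add_sum_erase Finset.univ (fun l => (if l = b x then 2 * M (b x) (b x) else M (min (b x) l) (max (b x) l))) (Finset.mem_univ (b x))
        have e2 := Finset.add_sum_erase Finset.univ (fun a => M a (b x)) (Finset.mem_univ (b x))
        have e3 := Finset.add_sum_erase Finset.univ (fun c => M (b x) c) (Finset.mem_univ (b x))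
        beta_reduce at e1 e2 e3
        simp only [eq_self_iff_true, if_true] at e1
        have e4 : (∑ l ∈ Finset.univ.erase (b x), (if l = b x then 2 * M (b x) (b x) else M (min (b x) l) (max (b x) l)))
            = ∑ l ∈ Finset.univ.erase (b x), (M l (b x) + M (b x) l) :=
          Finset.sum_congr rfl (fun l hl => hWl l (Finset.ne_of_mem_erase hl))
        have e5 : (∑ l ∈ Finset.univ.erase (b x), (M l (b x) + M (b x) l))
            = (∑ l ∈ Finset.univ.erase (b x), M l (b x))
              + ∑ l ∈ Finset.univ.erase (b x), M (b x) l := Finset.sum_add_distrib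
        have e6 := hdeg (b x)
        omega
      calc (∑ y ∈ O.erase x,
              ((Finset.filter (fun P => ({x, y} : Finset ι) ∈ P) (Finset.filter (fun P => ∀ (k l : Fin n), k ≤ l → (Finset.filter (fun p => Finset.image b p = {k, l}) P).card = M k l) (pairings O))).card : ℚ))
          = ∑ y ∈ O.erase x, ((∏ j : Fin n, ((Finset.filter (fun z => b z = j) O).card.factorial : ℚ)) / ((2 ^ ∑ j : Fin n, M j j) * ∏ a : Fin n, ∏ c : Fin n, ((M a c).factorial : ℚ))) * (((if (b y) = b x then 2 * M (b x) (b x) else M (min (b x) (b y)) (max (b x) (b y))) : ℕ) : ℚ) / (((Finset.filter (fun z => b z = b x) O).card : ℚ) * ((Finset.filter (fun z => b z = (b y)) (O.erase x)).card : ℚ)) := Finset.sum_congr rfl hval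
        _ = ∑ l : Fin n, ∑ y ∈ (O.erase x).filter (fun y => b y = l), ((∏ j : Fin n, ((Finset.filter (fun z => b z = j) O).card.factorial : ℚ)) / ((2 ^ ∑ j : Fin n, M j j) * ∏ a : Fin n, ∏ c : Fin n, ((M a c).factorial : ℚ))) * (((if (b y) = b x then 2 * M (b x) (b x) else M (min (b x) (b y)) (max (b x) (b y))) : ℕ) : ℚ) / (((Finset.filter (fun z => b z = b x) O).card : ℚ) * ((Finset.filter (fun z => b z = (b y)) (O.erase x)).card : ℚ)) :=
            (Finset.sum_fiberwise_of_maps_to (fun y _ => Finset.mem_univ (b y)) _).symm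
        _ = ∑ l : Fin n, ((Finset.filter (fun z => b z = l) (O.erase x)).card : ℚ) * (((∏ j : Fin n, ((Finset.filter (fun z => b z = j) O).card.factorial : ℚ)) / ((2 ^ ∑ j : Fin n, M j j) * ∏ a : Fin n, ∏ c : Fin n, ((M a c).factorial : ℚ))) * (((if l = b x then 2 * M (b x) (b x) else M (min (b x) l) (max (b x) l)) : ℕ) : ℚ) / (((Finset.filter (fun z => b z = b x) O).card : ℚ) * ((Finset.filter (fun z => b z = l) (O.erase x)).card : ℚ))) := by
            refine Finset.sum_congr rfl (fun l _ => ?_)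
            rw [show (∑ y ∈ (O.erase x).filter (fun y => b y = l), ((∏ j : Fin n, ((Finset.filter (fun z => b z = j) O).card.factorial : ℚ)) / ((2 ^ ∑ j : Fin n, M j j) * ∏ a : Fin n, ∏ c : Fin n, ((M a c).factorial : ℚ))) * (((if (b y) = b x then 2 * M (b x) (b x) else M (min (b x) (b y)) (max (b x) (b y))) : ℕ) : ℚ) / (((Finset.filter (fun z => b z = b x) O).card : ℚ) * ((Finset.filter (fun z => b z = (b y)) (O.erase x)).card : ℚ)))
                = ∑ _y ∈ (O.erase x).filter (fun y => b y = l), ((∏ j : Fin n, ((Finset.filter (fun z => b z = j) O).card.factorial : ℚ)) / ((2 ^ ∑ j : Fin n, M j j) * ∏ a : Fin n, ∏ c : Fin n, ((M a c).factorial : ℚ))) * (((if l = b x then 2 * M (b x) (b x) else M (min (b x) l) (max (b x) l)) : ℕ) : ℚ) / (((Finset.filter (fun z => b z = b x) O).card : ℚ) * ((Finset.filter (fun z => b z = l) (O.erase x)).card : ℚ)) from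
              Finset.sum_congr rfl (fun y hy => by rw [(Finset.mem_filter.mp hy).2]),
              Finset.sum_const, nsmul_eq_mul]
        _ = ∑ l : Fin n, ((∏ j : Fin n, ((Finset.filter (fun z => b z = j) O).card.factorial : ℚ)) / ((2 ^ ∑ j : Fin n, M j j) * ∏ a : Fin n, ∏ c : Fin n, ((M a c).factorial : ℚ))) * (((if l = b x then 2 * M (b x) (b x) else M (min (b x) l) (max (b x) l)) : ℕ) : ℚ) / ((Finset.filter (fun z => b z = b x) O).card : ℚ) := by
            refine Finset.sum_congr rfl (fun l _ => ?_)
            by_cases h0 : (Finset.filter (fun z => b z = l) (O.erase x)).card = 0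
            · rw [h0, hWzero l h0]
              simp
            · have he : ((Finset.filter (fun z => b z = l) (O.erase x)).card : ℚ) ≠ 0 := Nat.cast_ne_zero.mpr h0
              have hgen : ∀ (X c e : ℚ), e ≠ 0 → e * (X / (c * e)) = X / c := by
                intro X c e he'
                rcases eq_or_ne c 0 with rfl | hc
                · simp
                · field_simp
              exact hgen _ _ _ he
        _ = ((∏ j : Fin n, ((Finset.filter (fun z => b z = j) O).card.factorial : ℚ)) / ((2 ^ ∑ j : Fin n, M j j) * ∏ a : Fin n, ∏ c : Fin n, ((M a c).factorial : ℚ))) * ((∑ l : Fin n, (if l = b x then 2 * M (b x) (b x) else M (min (b x) l) (max (b x) l)) : ℕ) : ℚ) / ((Finset.filter (fun z => b z = b x) O).card : ℚ) := by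
            rw [← Finset.sum_div, ← Finset.mul_sum, Nat.cast_sum]
        _ = ((∏ j : Fin n, ((Finset.filter (fun z => b z = j) O).card.factorial : ℚ)) / ((2 ^ ∑ j : Fin n, M j j) * ∏ a : Fin n, ∏ c : Fin n, ((M a c).factorial : ℚ))) := by
            rw [hWsum, mul_div_assoc,
              div_self (Nat.cast_ne_zero.mpr (Nat.pos_iff_ne_zero.mp hckpos)), mul_one]


lemma mem_occSet {n : ℕ} (α : Fin n → ℕ) (z : Fin n × ℕ) :
    z ∈ occSet α ↔ z.2 < α z.1 := by
  cases z with
  | mk a r =>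
    simp only [occSet, Finset.mem_biUnion, Finset.mem_univ, true_and, Finset.mem_image,
      Finset.mem_range]
    constructor
    · rintro ⟨k, r', hr', he⟩
      obtain ⟨h1, h2⟩ := Prod.mk.injEq .. ▸ he
      exact h1 ▸ h2 ▸ hr'
    · intro h
      exact ⟨a, r, h, rfl⟩

open Classical in
lemma occSet_block_card {n : ℕ} (α : Fin n → ℕ) (j : Fin n) :
    ((occSet α).filter fun z => z.1 = j).card = α j := by
  have he : ((occSet α).filter fun z => z.1 = j)
      = (Finset.range (α j)).image fun r => (j, r) := by
    ext z
    rw [Finset.mem_filter, mem_occSet]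
    simp only [Finset.mem_image, Finset.mem_range]
    constructor
    · rintro ⟨h1, h2⟩
      exact ⟨z.2, h2 ▸ h1, by rw [← h2]⟩
    · rintro ⟨r, hr, he⟩
      rw [← he]
      exact ⟨hr, rfl⟩
  rw [he, Finset.card_image_of_injective _ (fun r r' h => (Prod.mk.injEq .. ▸ h).2),
    Finset.card_range]

end CPM

open Classical in
/-- **Counting the pairings inducing a given multigraph.** Let `M` be an upper triangular
matrix in `ℕ₀^{n×n}` with `SC(M,j) + SR(M,j) = α_j` for all `j`. The number of pairings `P`
of `O = {(k,r) : k ∈ [n], 1 ≤ r ≤ α_k}` such that for all `k ≤ l` the number of pairs in `P`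
whose first coordinates are `k` and `l` equals `M k l`, is exactly
`α₁! ⋯ αₙ! / (2^{tr M} ∏_{a,b} M_{a,b}!)`. -/
theorem card_pairings_of_multigraph (n : ℕ) (α : Fin n → ℕ) (M : Matrix (Fin n) (Fin n) ℕ)
    (hupper : ∀ k l : Fin n, l < k → M k l = 0)
    (hdeg : ∀ j : Fin n, (∑ a, M a j) + (∑ b, M j b) = α j) :
    (((pairings (occSet α)).filter fun P =>
        ∀ k l : Fin n, k ≤ l →
          (P.filter fun p => p.image Prod.fst = ({k, l} : Finset (Fin n))).card = M k l).card
        : ℚ) =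
      (∏ j, (Nat.factorial (α j) : ℚ)) /
        ((2 : ℚ) ^ (∑ j, M j j) * ∏ a, ∏ b, (Nat.factorial (M a b) : ℚ)) := by
  have h := CPM.general (occSet α).card Prod.fst (occSet α) le_rfl M hupper
    (fun j => by rw [CPM.occSet_block_card]; exact hdeg j)
  simp only [CPM.occSet_block_card] at h
  exact h
end
end

section
/- Let $n = 2l$ be an even natural number and let $f : [0,1] \times [0,1] \to \mathbb{R}$ be continuous and symmetric. Then $\int_{\{0 \le s_1 \le \cdots \le s_n \le 1\}} \sum_{\mathcal{P}} \prod_{\{i,j\} \in \mathcal{P}} f(s_i,s_j) \, \mathrm{d}s_1 \cdots \mathrm{d}s_n = \frac{1}{l! \, 2^l} \left( \int_{[0,1]^2} f(s_1,s_2) \, \mathrm{d}s_1 \mathrm{d}s_2 \right)^l$, where the sum is over all pairings $\mathcal{P}$ of $\{1,\dots,n\}$. -/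
open MeasureTheory

noncomputable section

/-- The value of a symmetric kernel `A` on an unordered pair `p = {a, b}`:
for a two-element set `p = {a, b}` this is the symmetrization `(A a b + A b a) / 2`,
which equals `A a b` whenever `A` is symmetric. -/
def pairVal {ι : Type*} (A : ι → ι → ℝ) (p : Finset ι) : ℝ :=
  ((∑ a ∈ p, ∑ b ∈ p, A a b) - ∑ a ∈ p, A a a) / 2

/-- The ordered simplex `{0 ≤ s₁ ≤ ⋯ ≤ sₙ ≤ 1} ⊆ [0,1]ⁿ`. -/
def orderedSimplex (n : ℕ) : Set (Fin n → ℝ) :=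
  {s | Monotone s ∧ ∀ i, s i ∈ Set.Icc (0 : ℝ) 1}

section Aux

lemma pairVal_congr {ι : Type*} {A B : ι → ι → ℝ} {p : Finset ι}
    (h : ∀ i ∈ p, ∀ j ∈ p, A i j = B i j) : pairVal A p = pairVal B p := by
  unfold pairVal
  rw [Finset.sum_congr rfl (fun i hi => Finset.sum_congr rfl fun j hj => h i hi j hj),
    Finset.sum_congr rfl (fun i hi => h i hi i hi)]

lemma pairVal_pair {ι : Type*} [DecidableEq ι] {A : ι → ι → ℝ} {a b : ι} (h : a ≠ b) :
    pairVal A ({a, b} : Finset ι) = (A a b + A b a) / 2 := by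
  simp only [pairVal, Finset.sum_pair h]
  ring

lemma pairVal_eq_of_pair {ι : Type*} [DecidableEq ι] {A : ι → ι → ℝ} {p : Finset ι} {a b : ι}
    (hp : p = {a, b}) (h : a ≠ b) : pairVal A p = (A a b + A b a) / 2 := by
  rw [hp, pairVal_pair h]

lemma pairVal_map {ι κ : Type*} (g : κ ↪ ι) (A : ι → ι → ℝ) (p : Finset κ) :
    pairVal A (p.map g) = pairVal (fun i j => A (g i) (g j)) p := by
  simp [pairVal, Finset.sum_map]

lemma pairVal_image {ι κ : Type*} [DecidableEq ι] (g : κ → ι) (hg : Function.Injective g)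
    (A : ι → ι → ℝ) (p : Finset κ) :
    pairVal A (p.image g) = pairVal (fun i j => A (g i) (g j)) p := by
  have : p.image g = p.map ⟨g, hg⟩ := (Finset.map_eq_image ⟨g, hg⟩ p).symm
  rw [this, pairVal_map]; rfl

lemma mem_pairings {ι : Type*} [DecidableEq ι] {O : Finset ι} {P : Finset (Finset ι)} :
    P ∈ pairings O ↔ IsPairing O P := by
  classical
  simp only [pairings, Finset.mem_filter, Finset.mem_powerset, and_iff_right_iff_imp]
  intro hP
  intro p hp
  simp only [Finset.mem_powerset]
  intro x hx
  rw [← hP.2.2]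
  exact Finset.mem_biUnion.2 ⟨p, hp, hx⟩

lemma pairings_empty {ι : Type*} [DecidableEq ι] :
    pairings (∅ : Finset ι) = {∅} := by
  ext P
  rw [mem_pairings, Finset.mem_singleton]
  constructor
  · rintro ⟨h2, -, hU⟩
    by_contra hne
    obtain ⟨p, hp⟩ := Finset.nonempty_iff_ne_empty.2 hne
    have hc : p.card = 2 := h2 p hp
    obtain ⟨x, hx⟩ := Finset.card_pos.1 (by rw [hc]; omega)
    have : x ∈ P.biUnion id := Finset.mem_biUnion.2 ⟨p, hp, hx⟩
    rw [hU] at this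
    simp at this
  · rintro rfl
    exact ⟨by simp, by simp, by simp⟩

lemma IsPairing.pair_mem_unique {ι : Type*} [DecidableEq ι] {O : Finset ι}
    {P : Finset (Finset ι)} (hP : IsPairing O P) {a : ι} {p p' : Finset ι}
    (hp : p ∈ P) (hp' : p' ∈ P) (ha : a ∈ p) (ha' : a ∈ p') : p = p' := by
  by_contra hne
  exact (Finset.disjoint_left.1 (hP.2.1 p hp p' hp' hne) ha) ha'

/-- In a pairing of `O`, every `a ∈ O` lies in a unique pair `{a, b}`. -/
lemma IsPairing.exists_partner {ι : Type*} [DecidableEq ι] {O : Finset ι}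
    {P : Finset (Finset ι)} (hP : IsPairing O P) {a : ι} (ha : a ∈ O) :
    ∃ b ∈ O.erase a, ({a, b} : Finset ι) ∈ P := by
  rw [← hP.2.2] at ha
  obtain ⟨p, hpP, hap⟩ := Finset.mem_biUnion.1 ha
  simp only [id] at hap
  obtain ⟨x, y, hxy, rfl⟩ := Finset.card_eq_two.1 (hP.1 p hpP)
  have hsub : ({x, y} : Finset ι) ⊆ O := by
    intro z hz
    rw [← hP.2.2]
    exact Finset.mem_biUnion.2 ⟨_, hpP, hz⟩
  rcases Finset.mem_insert.1 hap with rfl | hay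
  · refine ⟨y, Finset.mem_erase.2 ⟨hxy.symm, hsub (by simp)⟩, hpP⟩
  · rw [Finset.mem_singleton] at hay
    subst hay
    refine ⟨x, Finset.mem_erase.2 ⟨hxy, hsub (by simp)⟩, ?_⟩
    rwa [Finset.pair_comm]

lemma IsPairing.partner_unique {ι : Type*} [DecidableEq ι] {O : Finset ι}
    {P : Finset (Finset ι)} (hP : IsPairing O P) {a b b' : ι}
    (hb : ({a, b} : Finset ι) ∈ P) (hb' : ({a, b'} : Finset ι) ∈ P)
    (hab : a ≠ b) (hab' : a ≠ b') : b = b' := by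
  have heq := hP.pair_mem_unique hb hb' (Finset.mem_insert_self a {b}) (Finset.mem_insert_self a {b'})
  have hbmem : b ∈ ({a, b'} : Finset ι) := heq ▸ (Finset.mem_insert_of_mem (Finset.mem_singleton_self b))
  rcases Finset.mem_insert.1 hbmem with rfl | h
  · exact absurd rfl hab
  · exact Finset.mem_singleton.1 h

end Aux


section Count

variable {ι : Type*} [DecidableEq ι]

lemma isPairing_erase {O : Finset ι} {P : Finset (Finset ι)} (hP : IsPairing O P)
    {q : Finset ι} (hq : q ∈ P) : IsPairing (O \ q) (P.erase q) := by
  refine ⟨fun p hp => hP.1 p (Finset.mem_of_mem_erase hp),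
    fun p hp p' hp' h => hP.2.1 p (Finset.mem_of_mem_erase hp) p' (Finset.mem_of_mem_erase hp') h,
    ?_⟩
  ext x
  simp only [Finset.mem_biUnion, Finset.mem_erase, id, Finset.mem_sdiff]
  constructor
  · rintro ⟨p, ⟨hpq, hpP⟩, hxp⟩
    refine ⟨?_, fun hxq => ?_⟩
    · rw [← hP.2.2]; exact Finset.mem_biUnion.2 ⟨p, hpP, hxp⟩
    · exact (Finset.disjoint_left.1 (hP.2.1 p hpP q hq hpq) hxp) hxq
  · rintro ⟨hxO, hxq⟩
    rw [← hP.2.2] at hxO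
    obtain ⟨p, hpP, hxp⟩ := Finset.mem_biUnion.1 hxO
    exact ⟨p, ⟨fun h => hxq (h ▸ hxp), hpP⟩, hxp⟩

lemma isPairing_insert {O : Finset ι} {P : Finset (Finset ι)} {q : Finset ι}
    (hP : IsPairing (O \ q) P) (hq2 : q.card = 2) (hqO : q ⊆ O) :
    IsPairing O (insert q P) := by
  have hdisj : ∀ p ∈ P, Disjoint q p := by
    intro p hp
    rw [Finset.disjoint_right]
    intro x hxp
    have : x ∈ O \ q := by rw [← hP.2.2]; exact Finset.mem_biUnion.2 ⟨p, hp, hxp⟩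
    exact (Finset.mem_sdiff.1 this).2
  refine ⟨?_, ?_, ?_⟩
  · intro p hp
    rcases Finset.mem_insert.1 hp with rfl | hp
    · exact hq2
    · exact hP.1 p hp
  · intro p hp p' hp' hne
    rcases Finset.mem_insert.1 hp with h1 | h1
    · rcases Finset.mem_insert.1 hp' with h2 | h2
      · exact absurd (h1.trans h2.symm) hne
      · exact h1 ▸ hdisj p' h2
    · rcases Finset.mem_insert.1 hp' with h2 | h2
      · exact h2 ▸ (hdisj p h1).symm
      · exact hP.2.1 p h1 p' h2 hne
  · rw [Finset.biUnion_insert, hP.2.2]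
    simp only [id]
    rw [Finset.union_comm, Finset.sdiff_union_of_subset hqO]

lemma pairings_card : ∀ (l : ℕ) (O : Finset ι), O.card = 2 * l →
    (pairings O).card * (l.factorial * 2 ^ l) = (2 * l).factorial := by
  intro l
  induction l with
  | zero =>
    intro O hO
    have : O = ∅ := Finset.card_eq_zero.1 (by omega)
    subst this
    rw [pairings_empty]
    simp
  | succ l ih =>
    intro O hO
    obtain ⟨a, ha⟩ : O.Nonempty := Finset.card_pos.1 (by omega)
    classical
    -- the partner function
    set F : Finset (Finset ι) → ι := fun P =>
      if h : ∃ b ∈ O.erase a, ({a, b} : Finset ι) ∈ P then h.choose else a with hF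
    have hFmem : ∀ P ∈ pairings O, F P ∈ O.erase a := by
      intro P hP
      have hex := (mem_pairings.1 hP).exists_partner ha
      rw [hF]
      simp only [dif_pos hex]
      exact hex.choose_spec.1
    have hFiff : ∀ P ∈ pairings O, ∀ b ∈ O.erase a, (F P = b ↔ ({a, b} : Finset ι) ∈ P) := by
      intro P hP b hb
      have hPp := mem_pairings.1 hP
      have hex := hPp.exists_partner ha
      constructor
      · intro hFb
        rw [hF] at hFb
        simp only [dif_pos hex] at hFb
        exact hFb ▸ hex.choose_spec.2
      · intro hmem
        rw [hF]
        simp only [dif_pos hex]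
        exact hPp.partner_unique hex.choose_spec.2 hmem
          (fun h => (Finset.mem_erase.1 hex.choose_spec.1).1 h.symm)
          (fun h => (Finset.mem_erase.1 hb).1 h.symm)
    have hsplit : (pairings O).card =
        ∑ b ∈ O.erase a, ((pairings O).filter (fun P => F P = b)).card :=
      Finset.card_eq_sum_card_fiberwise hFmem
    -- each fiber has the cardinality of pairings of a smaller set
    have hfiber : ∀ b ∈ O.erase a,
        ((pairings O).filter (fun P => F P = b)).card
          = (pairings (O \ {a, b})).card := by
      intro b hb
      have hab : a ≠ b := fun h => (Finset.mem_erase.1 hb).1 h.symm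
      have hbO : b ∈ O := (Finset.mem_erase.1 hb).2
      have hq2 : ({a, b} : Finset ι).card = 2 := Finset.card_pair hab
      have hqO : ({a, b} : Finset ι) ⊆ O := by
        intro z hz
        rcases Finset.mem_insert.1 hz with rfl | hz
        · exact ha
        · exact (Finset.mem_singleton.1 hz) ▸ hbO
      refine Finset.card_bij' (fun P _ => P.erase {a, b}) (fun Q _ => insert {a, b} Q)
        ?_ ?_ ?_ ?_
      · intro P hP
        rw [Finset.mem_filter] at hP
        rw [mem_pairings]
        exact isPairing_erase (mem_pairings.1 hP.1) (((hFiff P hP.1 b hb).1 hP.2))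
      · intro Q hQ
        rw [mem_pairings] at hQ
        rw [Finset.mem_filter]
        have hins := isPairing_insert hQ hq2 hqO
        constructor
        · exact mem_pairings.2 hins
        · exact (hFiff _ (mem_pairings.2 hins) b hb).2 (Finset.mem_insert_self _ _)
      · intro P hP
        rw [Finset.mem_filter] at hP
        exact Finset.insert_erase ((hFiff P hP.1 b hb).1 hP.2)
      · intro Q hQ
        rw [mem_pairings] at hQ
        apply Finset.erase_insert
        intro hmem
        have : a ∈ O \ ({a, b} : Finset ι) := by
          rw [← hQ.2.2]
          exact Finset.mem_biUnion.2 ⟨_, hmem, Finset.mem_insert_self _ _⟩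
        simp at this
    -- all the small sets have cardinality 2*l
    have hsmall : ∀ b ∈ O.erase a,
        (pairings (O \ {a, b})).card * (l.factorial * 2 ^ l) = (2 * l).factorial := by
      intro b hb
      have hab : a ≠ b := fun h => (Finset.mem_erase.1 hb).1 h.symm
      have hbO : b ∈ O := (Finset.mem_erase.1 hb).2
      apply ih
      rw [Finset.card_sdiff_of_subset (by
        intro z hz
        rcases Finset.mem_insert.1 hz with rfl | hz
        · exact ha
        · exact (Finset.mem_singleton.1 hz) ▸ hbO)]
      rw [Finset.card_pair hab, hO]
      omega
    have hkey : (pairings O).card * (l.factorial * 2 ^ l) = (2 * l + 1) * (2 * l).factorial := by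
      rw [hsplit, Finset.sum_mul]
      rw [Finset.sum_congr rfl (fun b hb => by rw [hfiber b hb, hsmall b hb])]
      rw [Finset.sum_const, Finset.card_erase_of_mem ha, hO]
      have h21 : 2 * (l + 1) - 1 = 2 * l + 1 := by omega
      rw [h21, smul_eq_mul]
    have : (pairings O).card * ((l + 1).factorial * 2 ^ (l + 1))
        = ((pairings O).card * (l.factorial * 2 ^ l)) * ((l + 1) * 2) := by
      rw [Nat.factorial_succ]; ring
    rw [this, hkey]
    have h1 : 2 * (l + 1) = (2 * l + 1) + 1 := by ring
    rw [h1, Nat.factorial_succ, Nat.factorial_succ]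
    ring

end Count

section Symm

lemma isPairing_image {ι : Type*} [DecidableEq ι] [Fintype ι] {P : Finset (Finset ι)}
    (hP : IsPairing Finset.univ P) (σ : Equiv.Perm ι) :
    IsPairing Finset.univ (P.image (fun p => p.image σ)) := by
  refine ⟨?_, ?_, ?_⟩
  · intro p hp
    obtain ⟨p₀, hp₀, rfl⟩ := Finset.mem_image.1 hp
    rw [Finset.card_image_of_injective _ σ.injective]
    exact hP.1 p₀ hp₀
  · intro p hp p' hp' hne
    obtain ⟨p₀, hp₀, rfl⟩ := Finset.mem_image.1 hp
    obtain ⟨p₁, hp₁, rfl⟩ := Finset.mem_image.1 hp'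
    rw [Finset.disjoint_image σ.injective]
    exact hP.2.1 p₀ hp₀ p₁ hp₁ (fun h => hne (h ▸ rfl))
  · ext x
    simp only [Finset.mem_biUnion, Finset.mem_image, id, Finset.mem_univ, iff_true]
    have : σ.symm x ∈ P.biUnion id := by rw [hP.2.2]; exact Finset.mem_univ _
    obtain ⟨p, hp, hxp⟩ := Finset.mem_biUnion.1 this
    exact ⟨p.image σ, ⟨p, hp, rfl⟩, Finset.mem_image.2 ⟨σ.symm x, hxp, σ.apply_symm_apply x⟩⟩

set_option maxHeartbeats 1000000 in
lemma pairings_sum_comp {ι : Type*} [DecidableEq ι] [Fintype ι]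
    (A : ι → ι → ℝ) (σ : Equiv.Perm ι) :
    ∑ P ∈ pairings (Finset.univ : Finset ι), ∏ p ∈ P, pairVal (fun i j => A (σ i) (σ j)) p
      = ∑ P ∈ pairings (Finset.univ : Finset ι), ∏ p ∈ P, pairVal A p := by
  classical
  have himg : Function.Injective (fun p : Finset ι => p.image σ) :=
    fun p q h => by
      have := congrArg (Finset.image σ.symm) h
      simpa [Finset.image_image, Function.comp_def] using this
  refine Finset.sum_nbij' (fun P => P.image (fun p => p.image σ))
    (fun P => P.image (fun p => p.image σ.symm)) ?_ ?_ ?_ ?_ ?_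
  · intro P hP
    exact mem_pairings.2 (isPairing_image (mem_pairings.1 hP) σ)
  · intro P hP
    exact mem_pairings.2 (isPairing_image (mem_pairings.1 hP) σ.symm)
  · intro P hP
    ext p
    simp [Finset.image_image, Function.comp_def, Finset.image_image]
  · intro P hP
    ext p
    simp [Finset.image_image, Function.comp_def]
  · intro P hP
    rw [Finset.prod_image (fun p _ q _ h => himg h)]
    exact Finset.prod_congr rfl fun p _ => (pairVal_image σ σ.injective A p).symm

end Symm

section PairInt

lemma integrable_kernel (f : ℝ → ℝ → ℝ)
    (hf : ContinuousOn (fun p : ℝ × ℝ => f p.1 p.2) (Set.Icc 0 1 ×ˢ Set.Icc 0 1)) :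
    IntegrableOn (fun z : ℝ × ℝ => f z.1 z.2) (Set.Icc 0 1 ×ˢ Set.Icc 0 1) volume :=
  hf.integrableOn_compact (isCompact_Icc.prod isCompact_Icc)

lemma integral_pair_kernel (f : ℝ → ℝ → ℝ)
    (hf : ContinuousOn (fun p : ℝ × ℝ => f p.1 p.2) (Set.Icc 0 1 ×ˢ Set.Icc 0 1))
    (hsymm : ∀ s ∈ Set.Icc (0 : ℝ) 1, ∀ t ∈ Set.Icc (0 : ℝ) 1, f s t = f t s)
    (κ : Type) [Fintype κ] [DecidableEq κ] (u v : κ) (huv : u ≠ v)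
    (hall : ∀ w : κ, w = u ∨ w = v) :
    ∫ a in Set.univ.pi (fun _ : κ => Set.Icc (0:ℝ) 1),
        (f (a u) (a v) + f (a v) (a u)) / 2
      = ∫ x in Set.Icc (0:ℝ) 1, ∫ y in Set.Icc (0:ℝ) 1, f x y := by
  classical
  let ε : κ ≃ Fin 2 :=
  { toFun := fun w => if w = u then 0 else 1
    invFun := ![u, v]
    left_inv := by
      intro w
      rcases hall w with rfl | rfl
      · simp
      · simp [huv.symm]
    right_inv := by
      intro i
      fin_cases i
      · simp
      · simp [huv.symm] }
  let E : (ℝ × ℝ) ≃ᵐ (κ → ℝ) :=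
    MeasurableEquiv.finTwoArrow.symm.trans
      (MeasurableEquiv.arrowCongr' ε.symm (MeasurableEquiv.refl ℝ))
  have h1 : MeasurePreserving
      (MeasurableEquiv.arrowCongr' ε.symm (MeasurableEquiv.refl ℝ) : (Fin 2 → ℝ) ≃ᵐ (κ → ℝ))
      volume volume :=
    volume_preserving_arrowCongr' _ _ (MeasurePreserving.id _)
  have h2 : MeasurePreserving (MeasurableEquiv.finTwoArrow.symm : (ℝ × ℝ) ≃ᵐ (Fin 2 → ℝ))
      volume volume := (volume_preserving_finTwoArrow ℝ).symm _
  have hE : MeasurePreserving E volume volume := h1.comp h2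
  have hEapp : ∀ (z : ℝ × ℝ) (w : κ), E z w = ![z.1, z.2] (ε w) := fun z w => rfl
  have hEu : ∀ z : ℝ × ℝ, E z u = z.1 := by
    intro z; rw [hEapp]
    have : ε u = 0 := if_pos rfl
    rw [this]; rfl
  have hEv : ∀ z : ℝ × ℝ, E z v = z.2 := by
    intro z; rw [hEapp]
    have : ε v = 1 := if_neg huv.symm
    rw [this]; rfl
  have hpre : E ⁻¹' (Set.univ.pi fun _ : κ => Set.Icc (0:ℝ) 1)
      = Set.Icc 0 1 ×ˢ Set.Icc 0 1 := by
    ext z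
    simp only [Set.mem_preimage, Set.mem_pi, Set.mem_univ, forall_true_left, Set.mem_prod]
    constructor
    · intro h
      exact ⟨(hEu z) ▸ h u, (hEv z) ▸ h v⟩
    · rintro ⟨hz1, hz2⟩ w
      rcases hall w with rfl | rfl
      · rw [hEu]; exact hz1
      · rw [hEv]; exact hz2
  have step1 : ∫ a in Set.univ.pi (fun _ : κ => Set.Icc (0:ℝ) 1),
        (f (a u) (a v) + f (a v) (a u)) / 2
      = ∫ z in Set.Icc (0:ℝ) 1 ×ˢ Set.Icc (0:ℝ) 1,
          (f z.1 z.2 + f z.2 z.1) / 2 := by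
    rw [← hE.setIntegral_preimage_emb E.measurableEmbedding
      (fun a => (f (a u) (a v) + f (a v) (a u)) / 2) _, hpre]
    refine setIntegral_congr_fun (measurableSet_Icc.prod measurableSet_Icc) ?_
    intro z _
    simp only [hEu, hEv]
  rw [step1]
  have step2 : ∫ z in Set.Icc (0:ℝ) 1 ×ˢ Set.Icc (0:ℝ) 1,
        (f z.1 z.2 + f z.2 z.1) / 2
      = ∫ z in Set.Icc (0:ℝ) 1 ×ˢ Set.Icc (0:ℝ) 1, f z.1 z.2 := by
    refine setIntegral_congr_fun (measurableSet_Icc.prod measurableSet_Icc) ?_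
    intro z hz
    simp only [hsymm z.1 hz.1 z.2 hz.2]
    ring
  rw [step2]
  have hint := integrable_kernel f hf
  rw [show (volume : Measure (ℝ × ℝ)) = Measure.prod volume volume from Measure.volume_eq_prod ℝ ℝ] at hint ⊢
  rw [← Measure.prod_restrict]
  exact integral_prod _ (by rwa [Measure.prod_restrict])

end PairInt

section ProdInt

set_option maxHeartbeats 1000000 in
lemma integral_cube_pairVal_prod (f : ℝ → ℝ → ℝ)
    (hf : ContinuousOn (fun p : ℝ × ℝ => f p.1 p.2) (Set.Icc 0 1 ×ˢ Set.Icc 0 1))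
    (hsymm : ∀ s ∈ Set.Icc (0 : ℝ) 1, ∀ t ∈ Set.Icc (0 : ℝ) 1, f s t = f t s) :
    ∀ (m : ℕ) (ι : Type) [Fintype ι] [DecidableEq ι] (P : Finset (Finset ι)),
      P.card = m → (∀ p ∈ P, p.card = 2) →
      (∀ p ∈ P, ∀ q ∈ P, p ≠ q → Disjoint p q) →
      (∫ s in Set.univ.pi (fun _ : ι => Set.Icc (0:ℝ) 1),
          ∏ p ∈ P, pairVal (fun i j => f (s i) (s j)) p)
        = (∫ x in Set.Icc (0:ℝ) 1, ∫ y in Set.Icc (0:ℝ) 1, f x y) ^ m := by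
  intro m
  induction m with
  | zero =>
    intro ι _ _ P hcard _ _
    rw [Finset.card_eq_zero.1 hcard]
    simp only [Finset.prod_empty, pow_zero]
    rw [setIntegral_const, MeasureTheory.volume_pi, measureReal_def, Measure.pi_pi]
    simp [Real.volume_Icc]
  | succ m ih =>
    intro ι _ _ P hcard h2 hdisj
    classical
    obtain ⟨q, hq⟩ : P.Nonempty := Finset.card_pos.1 (by omega)
    obtain ⟨x, y, hxy, hqxy⟩ := Finset.card_eq_two.1 (h2 q hq)
    letI instA : Fintype {i : ι // i ∈ q} := Subtype.fintype _
    letI instB : Fintype {i : ι // ¬ i ∈ q} := Subtype.fintype _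
    have hxq : x ∈ q := by rw [hqxy]; exact Finset.mem_insert_self _ _
    have hyq : y ∈ q := by rw [hqxy]; exact Finset.mem_insert_of_mem (Finset.mem_singleton_self _)
    -- split the coordinates
    set e := MeasurableEquiv.piEquivPiSubtypeProd (fun _ : ι => ℝ) (· ∈ q) with he
    have hmp : MeasurePreserving e.symm volume volume :=
      (volume_preserving_piEquivPiSubtypeProd (fun _ : ι => ℝ) (· ∈ q)).symm _
    set G : ({i : ι // i ∈ q} → ℝ) → ℝ := fun a =>
      pairVal (fun i j : ι => f (if h : i ∈ q then a ⟨i, h⟩ else 0)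
        (if h : j ∈ q then a ⟨j, h⟩ else 0)) q with hG
    set H : ({i : ι // ¬ i ∈ q} → ℝ) → ℝ := fun b =>
      ∏ r ∈ P.erase q, pairVal (fun i j : ι => f (if h : ¬ i ∈ q then b ⟨i, h⟩ else 0)
        (if h : ¬ j ∈ q then b ⟨j, h⟩ else 0)) r with hH
    have hsplit : ∀ z : ({i : ι // i ∈ q} → ℝ) × ({i : ι // ¬ i ∈ q} → ℝ),
        (∏ p ∈ P, pairVal (fun i j => f (e.symm z i) (e.symm z j)) p) = G z.1 * H z.2 := by
      intro z
      rw [← Finset.mul_prod_erase P _ hq]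
      have happ : ∀ i : ι, e.symm z i = if h : i ∈ q then z.1 ⟨i, h⟩ else z.2 ⟨i, h⟩ :=
        fun i => rfl
      congr 1
      · refine pairVal_congr ?_
        intro i hi j hj
        simp only [happ, dif_pos hi, dif_pos hj]
      · refine Finset.prod_congr rfl ?_
        intro r hr
        have hrq : Disjoint r q :=
          hdisj r (Finset.mem_of_mem_erase hr) q hq (Finset.ne_of_mem_erase hr)
        refine pairVal_congr ?_
        intro i hi j hj
        have hiq : ¬ i ∈ q := Finset.disjoint_left.1 hrq hi
        have hjq : ¬ j ∈ q := Finset.disjoint_left.1 hrq hj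
        simp only [happ, dif_neg hiq, dif_neg hjq, dif_pos hiq, dif_pos hjq]
    have hpre : e.symm ⁻¹' (Set.univ.pi fun _ : ι => Set.Icc (0:ℝ) 1)
        = (Set.univ.pi fun _ : {i : ι // i ∈ q} => Set.Icc (0:ℝ) 1) ×ˢ
          (Set.univ.pi fun _ : {i : ι // ¬ i ∈ q} => Set.Icc (0:ℝ) 1) := by
      ext z
      simp only [Set.mem_preimage, Set.mem_pi, Set.mem_univ, forall_true_left, Set.mem_prod]
      constructor
      · intro h
        constructor
        · intro i
          have := h i.1
          rwa [show e.symm z i.1 = z.1 i from by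
            show (if h : (i : ι) ∈ q then z.1 ⟨i, h⟩ else z.2 ⟨i, h⟩) = z.1 i
            rw [dif_pos i.2]] at this
        · intro i
          have := h i.1
          rwa [show e.symm z i.1 = z.2 i from by
            show (if h : (i : ι) ∈ q then z.1 ⟨i, h⟩ else z.2 ⟨i, h⟩) = z.2 i
            rw [dif_neg i.2]] at this
      · rintro ⟨ha, hb⟩ i
        show (if h : i ∈ q then z.1 ⟨i, h⟩ else z.2 ⟨i, h⟩) ∈ Set.Icc (0:ℝ) 1
        by_cases h : i ∈ q
        · rw [dif_pos h]; exact ha ⟨i, h⟩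
        · rw [dif_neg h]; exact hb ⟨i, h⟩
    have step1 : (∫ s in Set.univ.pi (fun _ : ι => Set.Icc (0:ℝ) 1),
          ∏ p ∈ P, pairVal (fun i j => f (s i) (s j)) p)
        = (∫ a in Set.univ.pi (fun _ : {i : ι // i ∈ q} => Set.Icc (0:ℝ) 1), G a)
          * ∫ b in Set.univ.pi (fun _ : {i : ι // ¬ i ∈ q} => Set.Icc (0:ℝ) 1), H b := by
      rw [← hmp.setIntegral_preimage_emb e.symm.measurableEmbedding
        (fun s => ∏ p ∈ P, pairVal (fun i j => f (s i) (s j)) p) _, hpre]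
      rw [show (volume : Measure (({i : ι // i ∈ q} → ℝ) × ({i : ι // ¬ i ∈ q} → ℝ)))
        = Measure.prod volume volume from Measure.volume_eq_prod _ _]
      rw [← Measure.prod_restrict]
      rw [show (fun z : ({i : ι // i ∈ q} → ℝ) × ({i : ι // ¬ i ∈ q} → ℝ) =>
          ∏ p ∈ P, pairVal (fun i j => f (e.symm z i) (e.symm z j)) p)
        = fun z => G z.1 * H z.2 from funext hsplit]
      exact integral_prod_mul G H
    -- the G-integral
    have hGint : (∫ a in Set.univ.pi (fun _ : {i : ι // i ∈ q} => Set.Icc (0:ℝ) 1), G a)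
        = ∫ x in Set.Icc (0:ℝ) 1, ∫ y in Set.Icc (0:ℝ) 1, f x y := by
      have hGa : ∀ a : {i : ι // i ∈ q} → ℝ,
          G a = (f (a ⟨x, hxq⟩) (a ⟨y, hyq⟩) + f (a ⟨y, hyq⟩) (a ⟨x, hxq⟩)) / 2 := by
        intro a
        simp only [hG]
        rw [pairVal_eq_of_pair hqxy hxy, dif_pos hxq, dif_pos hyq]
      rw [show G = fun a => (f (a ⟨x, hxq⟩) (a ⟨y, hyq⟩) + f (a ⟨y, hyq⟩) (a ⟨x, hxq⟩)) / 2
        from funext hGa]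
      refine integral_pair_kernel f hf hsymm _ ⟨x, hxq⟩ ⟨y, hyq⟩
        (fun h => hxy (congrArg Subtype.val h)) ?_
      rintro ⟨w, hw⟩
      rw [hqxy] at hw
      rcases Finset.mem_insert.1 hw with rfl | hw
      · exact Or.inl rfl
      · exact Or.inr (by simp [Finset.mem_singleton.1 hw])
    -- the H-integral via the inductive hypothesis
    have hHint : (∫ b in Set.univ.pi (fun _ : {i : ι // ¬ i ∈ q} => Set.Icc (0:ℝ) 1), H b)
        = (∫ x in Set.Icc (0:ℝ) 1, ∫ y in Set.Icc (0:ℝ) 1, f x y) ^ m := by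
      have hsub : ∀ r ∈ P.erase q, ∀ i ∈ r, (¬ i ∈ q) := by
        intro r hr i hi
        exact Finset.disjoint_left.1
          (hdisj r (Finset.mem_of_mem_erase hr) q hq (Finset.ne_of_mem_erase hr)) hi
      have hback : ∀ r ∈ P.erase q,
          (Finset.subtype (fun i => ¬ i ∈ q) r).map (Function.Embedding.subtype (fun i => ¬ i ∈ q)) = r := by
        intro r hr
        rw [Finset.subtype_map, Finset.filter_true_of_mem (hsub r hr)]
      have hinj : Set.InjOn (Finset.subtype (fun i => ¬ i ∈ q)) (P.erase q) := by
        intro r hr r' hr' hrr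
        rw [← hback r hr, ← hback r' hr', hrr]
      set P' : Finset (Finset {i : ι // ¬ i ∈ q}) := (P.erase q).image (Finset.subtype (fun i => ¬ i ∈ q))
        with hP'
      have hHb : ∀ b, H b = ∏ r' ∈ P', pairVal (fun i j => f (b i) (b j)) r' := by
        intro b
        simp only [hH]
        rw [hP', Finset.prod_image (fun r hr r' hr' h => hinj hr hr' h)]
        refine Finset.prod_congr rfl ?_
        intro r hr
        conv_lhs => rw [← hback r hr]
        rw [pairVal_map]
        refine pairVal_congr ?_
        intro i _ j _
        have h1 : (if h : ((Function.Embedding.subtype fun i => ¬ i ∈ q) i : ι) ∉ q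
            then b ⟨((Function.Embedding.subtype fun i => ¬ i ∈ q) i : ι), h⟩ else 0) = b i :=
          dif_pos i.2
        have h2 : (if h : ((Function.Embedding.subtype fun i => ¬ i ∈ q) j : ι) ∉ q
            then b ⟨((Function.Embedding.subtype fun i => ¬ i ∈ q) j : ι), h⟩ else 0) = b j :=
          dif_pos j.2
        rw [h1, h2]
      rw [show H = fun b => ∏ r' ∈ P', pairVal (fun i j => f (b i) (b j)) r'
        from funext hHb]
      refine ih _ P' ?_ ?_ ?_
      · rw [hP', Finset.card_image_of_injOn hinj, Finset.card_erase_of_mem hq, hcard]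
        omega
      · intro p' hp'
        obtain ⟨r, hr, rfl⟩ := Finset.mem_image.1 hp'
        have := congrArg Finset.card (hback r hr)
        rw [Finset.card_map] at this
        rw [this]
        exact h2 r (Finset.mem_of_mem_erase hr)
      · intro p' hp' p'' hp'' hne
        obtain ⟨r, hr, rfl⟩ := Finset.mem_image.1 hp'
        obtain ⟨r', hr', rfl⟩ := Finset.mem_image.1 hp''
        rw [Finset.disjoint_left]
        intro i hi hi'
        rw [Finset.mem_subtype] at hi hi'
        have : r = r' := by
          by_contra hc
          exact (Finset.disjoint_left.1
            (hdisj r (Finset.mem_of_mem_erase hr) r' (Finset.mem_of_mem_erase hr') hc) hi) hi'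
        exact hne (this ▸ rfl)
    rw [step1, hGint, hHint, pow_succ]
    ring

end ProdInt

section Symmetrize

lemma measurableSet_orderedSimplex (N : ℕ) : MeasurableSet (orderedSimplex N) := by
  have h1 : MeasurableSet {s : Fin N → ℝ | Monotone s} := by
    have : {s : Fin N → ℝ | Monotone s}
        = ⋂ (i : Fin N), ⋂ (j : Fin N), ⋂ (_ : i ≤ j), {s : Fin N → ℝ | s i ≤ s j} := by
      ext s
      simp only [Set.mem_setOf_eq, Set.mem_iInter]
      exact ⟨fun h i j hij => h hij, fun h a b hab => h a b hab⟩
    rw [this]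
    exact MeasurableSet.iInter fun i => MeasurableSet.iInter fun j =>
      MeasurableSet.iInter fun _ =>
        measurableSet_le (measurable_pi_apply i) (measurable_pi_apply j)
  have h2 : orderedSimplex N
      = {s : Fin N → ℝ | Monotone s} ∩ Set.univ.pi fun _ => Set.Icc (0:ℝ) 1 := by
    ext s
    simp only [orderedSimplex, Set.mem_inter_iff, Set.mem_setOf_eq, Set.mem_pi, Set.mem_univ,
      forall_true_left]
  rw [h2]
  exact h1.inter (MeasurableSet.univ_pi fun _ => measurableSet_Icc)

lemma diag_null (N : ℕ) :
    volume {s : Fin N → ℝ | ∃ i j, i ≠ j ∧ s i = s j} = 0 := by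
  have hset : {s : Fin N → ℝ | ∃ i j, i ≠ j ∧ s i = s j}
      = ⋃ (i : Fin N), ⋃ (j : Fin N), ⋃ (_ : i ≠ j), {s : Fin N → ℝ | s i = s j} := by
    ext s; simp
  rw [hset]
  refine measure_iUnion_null fun i => measure_iUnion_null fun j =>
    measure_iUnion_null fun hij => ?_
  have hker : {s : Fin N → ℝ | s i = s j} =
      ↑(LinearMap.ker ((LinearMap.proj i : (Fin N → ℝ) →ₗ[ℝ] ℝ) - LinearMap.proj j)) := by
    ext s
    simp [LinearMap.mem_ker, sub_eq_zero]
  rw [hker]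
  refine Measure.addHaar_submodule _ _ ?_
  intro htop
  have hmem : Pi.single i (1:ℝ) ∈
      LinearMap.ker ((LinearMap.proj i : (Fin N → ℝ) →ₗ[ℝ] ℝ) - LinearMap.proj j) := by
    rw [htop]; trivial
  rw [LinearMap.mem_ker] at hmem
  simp only [LinearMap.sub_apply, LinearMap.proj_apply] at hmem
  rw [Pi.single_eq_same, Pi.single_eq_of_ne (Ne.symm hij)] at hmem
  norm_num at hmem

lemma integral_cube_eq_factorial_mul {N : ℕ} (g : (Fin N → ℝ) → ℝ)
    (hsym : ∀ (σ : Equiv.Perm (Fin N)) (s : Fin N → ℝ), g (s ∘ σ) = g s)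
    (hint : IntegrableOn g (Set.univ.pi fun _ : Fin N => Set.Icc (0:ℝ) 1) volume) :
    (∫ s in Set.univ.pi (fun _ : Fin N => Set.Icc (0:ℝ) 1), g s)
      = (N.factorial : ℝ) * ∫ s in orderedSimplex N, g s := by
  classical
  set D := {s : Fin N → ℝ | ∃ i j, i ≠ j ∧ s i = s j} with hDdef
  have hDnull : volume D = 0 := diag_null N
  have hDmeas : MeasurableSet D := by
    have hset : D = ⋃ (i : Fin N), ⋃ (j : Fin N), ⋃ (_ : i ≠ j),
        {s : Fin N → ℝ | s i = s j} := by
      ext s; simp [hDdef]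
    rw [hset]
    exact MeasurableSet.iUnion fun i => MeasurableSet.iUnion fun j =>
      MeasurableSet.iUnion fun _ =>
        measurableSet_eq_fun (measurable_pi_apply i) (measurable_pi_apply j)
  set cube := Set.univ.pi (fun _ : Fin N => Set.Icc (0:ℝ) 1) with hcube
  have hcubemeas : MeasurableSet cube := MeasurableSet.univ_pi fun _ => measurableSet_Icc
  -- the transformation maps
  set T : Equiv.Perm (Fin N) → ((Fin N → ℝ) ≃ᵐ (Fin N → ℝ)) := fun σ =>
    MeasurableEquiv.arrowCongr' (σ.symm : Fin N ≃ Fin N) (MeasurableEquiv.refl ℝ) with hT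
  have hTapp : ∀ σ s, T σ s = s ∘ σ := fun σ s => rfl
  have hTmp : ∀ σ, MeasurePreserving (T σ) volume volume := fun σ =>
    volume_preserving_arrowCongr' _ _ (MeasurePreserving.id _)
  set S : Equiv.Perm (Fin N) → Set (Fin N → ℝ) := fun σ => (T σ) ⁻¹' orderedSimplex N with hS
  have hSmeas : ∀ σ, MeasurableSet (S σ) :=
    fun σ => (T σ).measurable (measurableSet_orderedSimplex N)
  have hSsub : ∀ σ, S σ ⊆ cube := by
    intro σ s hs
    rw [Set.mem_preimage] at hs
    intro i _
    have := hs.2 (σ.symm i)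
    rw [hTapp] at this
    simpa using this
  have hSint : ∀ σ, (∫ s in S σ, g s) = ∫ s in orderedSimplex N, g s := by
    intro σ
    rw [setIntegral_congr_fun (hSmeas σ) (g := fun s => g (T σ s))
      (fun s _ => (hsym σ s).symm)]
    exact (hTmp σ).setIntegral_preimage_emb (T σ).measurableEmbedding g _
  -- covering
  have hunion : (⋃ σ ∈ (Finset.univ : Finset (Equiv.Perm (Fin N))), (S σ \ D)) = cube \ D := by
    apply Set.Subset.antisymm
    · intro s hs
      simp only [Set.mem_iUnion] at hs
      obtain ⟨σ, -, hsS, hsD⟩ := hs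
      exact ⟨hSsub σ hsS, hsD⟩
    · rintro s ⟨hscube, hsD⟩
      simp only [Set.mem_iUnion]
      refine ⟨Tuple.sort s, Finset.mem_univ _, ?_, hsD⟩
      rw [Set.mem_preimage, hTapp]
      refine ⟨Tuple.monotone_sort s, fun i => ?_⟩
      exact hscube (Tuple.sort s i) (Set.mem_univ _)
  have hdisj : Set.Pairwise (↑(Finset.univ : Finset (Equiv.Perm (Fin N))))
      (Function.onFun Disjoint (fun σ => S σ \ D)) := by
    intro σ _ τ _ hστ
    rw [Function.onFun, Set.disjoint_left]
    rintro s ⟨hsσ, hsD⟩ ⟨hsτ, -⟩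
    apply hστ
    have hinj : Function.Injective s := by
      intro i j hij
      by_contra hne
      exact hsD ⟨i, j, hne, hij⟩
    rw [Set.mem_preimage, hTapp] at hsσ hsτ
    have h1 : s ∘ σ = s ∘ (Tuple.sort s) :=
      Tuple.comp_sort_eq_comp_iff_monotone.2 hsσ.1
    have h2 : s ∘ τ = s ∘ (Tuple.sort s) :=
      Tuple.comp_sort_eq_comp_iff_monotone.2 hsτ.1
    apply Equiv.ext
    intro i
    exact hinj (congrFun (h1.trans h2.symm) i)
  have step1 : (∫ s in cube, g s) = ∫ s in cube \ D, g s :=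
    (setIntegral_congr_set (MeasureTheory.diff_ae_eq_self.2
      (measure_mono_null Set.inter_subset_right hDnull))).symm
  have step2 : (∫ s in cube \ D, g s)
      = ∑ σ : Equiv.Perm (Fin N), ∫ s in S σ \ D, g s := by
    rw [← hunion]
    exact integral_biUnion_finset Finset.univ (fun σ _ => (hSmeas σ).diff hDmeas)
      hdisj (fun σ _ => hint.mono_set (fun s hs => hSsub σ hs.1))
  have step3 : ∀ σ : Equiv.Perm (Fin N),
      (∫ s in S σ \ D, g s) = ∫ s in orderedSimplex N, g s := by
    intro σ
    rw [setIntegral_congr_set (MeasureTheory.diff_ae_eq_self.2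
      (measure_mono_null Set.inter_subset_right hDnull))]
    exact hSint σ
  rw [step1, step2, Finset.sum_congr rfl (fun σ _ => step3 σ), Finset.sum_const]
  rw [Finset.card_univ, Fintype.card_perm, Fintype.card_fin]
  rw [nsmul_eq_mul]

end Symmetrize

/-- **The time-ordered integral of the Wick pairing sum of a symmetric kernel:**
`∫_{0 ≤ s₁ ≤ ⋯ ≤ s_{2l} ≤ 1} ∑_{pairings P} ∏_{{i,j} ∈ P} f(sᵢ, sⱼ) ds
  = 1/(l! 2^l) (∫_{[0,1]²} f)^l`. -/
theorem integral_pairing_sum_eq (l : ℕ) (f : ℝ → ℝ → ℝ)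
    (hf : ContinuousOn (fun p : ℝ × ℝ => f p.1 p.2) (Set.Icc 0 1 ×ˢ Set.Icc 0 1))
    (hsymm : ∀ s ∈ Set.Icc (0 : ℝ) 1, ∀ t ∈ Set.Icc (0 : ℝ) 1, f s t = f t s) :
    (∫ s in orderedSimplex (2 * l),
        ∑ P ∈ pairings (Finset.univ : Finset (Fin (2 * l))), ∏ p ∈ P,
          pairVal (fun i j => f (s i) (s j)) p) =
      (1 / ((l.factorial : ℝ) * 2 ^ l)) *
        (∫ x in Set.Icc (0 : ℝ) 1, ∫ y in Set.Icc (0 : ℝ) 1, f x y) ^ l := by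
  classical
  set N := 2 * l with hN
  set J := ∫ x in Set.Icc (0:ℝ) 1, ∫ y in Set.Icc (0:ℝ) 1, f x y with hJ
  set G : (Fin N → ℝ) → ℝ := fun s =>
    ∑ P ∈ pairings (Finset.univ : Finset (Fin N)), ∏ p ∈ P,
      pairVal (fun i j => f (s i) (s j)) p with hG
  have hfc : ∀ i j : Fin N, ContinuousOn (fun s : Fin N → ℝ => f (s i) (s j))
      (Set.univ.pi fun _ => Set.Icc (0:ℝ) 1) := by
    intro i j
    have hmaps : Set.MapsTo (fun s : Fin N → ℝ => (s i, s j))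
        (Set.univ.pi fun _ => Set.Icc (0:ℝ) 1) (Set.Icc 0 1 ×ˢ Set.Icc 0 1) :=
      fun s hs => ⟨hs i trivial, hs j trivial⟩
    have hcf : ContinuousOn (fun s : Fin N → ℝ => (s i, s j))
        (Set.univ.pi fun _ => Set.Icc (0:ℝ) 1) :=
      (((continuous_apply i).prodMk (continuous_apply j))).continuousOn
    exact hf.comp hcf hmaps
  have hcont : ∀ P : Finset (Finset (Fin N)), ContinuousOn
      (fun s : Fin N → ℝ => ∏ p ∈ P, pairVal (fun i j => f (s i) (s j)) p)
      (Set.univ.pi fun _ => Set.Icc (0:ℝ) 1) := by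
    intro P
    apply continuousOn_finset_prod
    intro p _
    unfold pairVal
    apply ContinuousOn.div_const
    apply ContinuousOn.sub
    · exact continuousOn_finset_sum _ fun i _ => continuousOn_finset_sum _ fun j _ => hfc i j
    · exact continuousOn_finset_sum _ fun i _ => hfc i i
  have hcompact : IsCompact (Set.univ.pi fun _ : Fin N => Set.Icc (0:ℝ) 1) :=
    isCompact_univ_pi fun _ => isCompact_Icc
  have hPint : ∀ P : Finset (Finset (Fin N)), IntegrableOn
      (fun s : Fin N → ℝ => ∏ p ∈ P, pairVal (fun i j => f (s i) (s j)) p)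
      (Set.univ.pi fun _ => Set.Icc (0:ℝ) 1) volume :=
    fun P => (hcont P).integrableOn_compact hcompact
  have hGint : IntegrableOn G (Set.univ.pi fun _ : Fin N => Set.Icc (0:ℝ) 1) volume := by
    have : ContinuousOn G (Set.univ.pi fun _ : Fin N => Set.Icc (0:ℝ) 1) :=
      continuousOn_finset_sum _ fun P _ => hcont P
    exact this.integrableOn_compact hcompact
  have hGsym : ∀ (σ : Equiv.Perm (Fin N)) (s : Fin N → ℝ), G (s ∘ σ) = G s :=
    fun σ s => pairings_sum_comp (fun i j => f (s i) (s j)) σ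
  have hsymint := integral_cube_eq_factorial_mul G hGsym hGint
  -- compute the cube integral
  have hPcard : ∀ P ∈ pairings (Finset.univ : Finset (Fin N)), P.card = l := by
    intro P hP
    have hPp := mem_pairings.1 hP
    have h1 : (P.biUnion id).card = ∑ p ∈ P, p.card :=
      Finset.card_biUnion (fun p hp p' hp' h => hPp.2.1 p hp p' hp' h)
    rw [hPp.2.2] at h1
    rw [Finset.sum_congr rfl (fun p hp => hPp.1 p hp), Finset.sum_const, smul_eq_mul] at h1
    simp only [Finset.card_univ, Fintype.card_fin] at h1
    omega
  have hcube : (∫ s in Set.univ.pi (fun _ : Fin N => Set.Icc (0:ℝ) 1), G s)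
      = ((pairings (Finset.univ : Finset (Fin N))).card : ℝ) * J ^ l := by
    rw [hG]
    rw [integral_finset_sum _ (fun P _ => hPint P)]
    rw [Finset.sum_congr rfl (fun P hP => by
      have hPp := mem_pairings.1 hP
      exact integral_cube_pairVal_prod f hf hsymm l (Fin N) P (hPcard P hP)
        hPp.1 hPp.2.1)]
    rw [Finset.sum_const, nsmul_eq_mul]
  -- counting
  have hcountN : (pairings (Finset.univ : Finset (Fin N))).card * (l.factorial * 2 ^ l)
      = N.factorial := by
    have := pairings_card (ι := Fin N) l Finset.univ (by simp [hN])
    rwa [← hN] at this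
  have hcount : ((pairings (Finset.univ : Finset (Fin N))).card : ℝ)
      * ((l.factorial : ℝ) * 2 ^ l) = (N.factorial : ℝ) := by
    exact_mod_cast congrArg (Nat.cast : ℕ → ℝ) hcountN
  have hfac : ((N.factorial : ℕ) : ℝ) ≠ 0 := Nat.cast_ne_zero.2 (Nat.factorial_ne_zero _)
  have hl2 : ((l.factorial : ℝ) * 2 ^ l) ≠ 0 := by positivity
  have hcard0 : ((pairings (Finset.univ : Finset (Fin N))).card : ℝ) ≠ 0 := by
    intro h
    rw [h, zero_mul] at hcount
    exact hfac hcount.symm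
  -- conclude
  have hmain : (N.factorial : ℝ) * (∫ s in orderedSimplex N, G s)
      = ((pairings (Finset.univ : Finset (Fin N))).card : ℝ) * J ^ l := by
    rw [← hsymint, hcube]
  have hfinal : (∫ s in orderedSimplex N, G s)
      = (((pairings (Finset.univ : Finset (Fin N))).card : ℝ) * J ^ l) / (N.factorial : ℝ) :=
    (eq_div_iff hfac).2 (by linarith [hmain])
  rw [hfinal, ← hcount]
  field_simp
end
end
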